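/- arXiv:1001.2621 — 9 statements merged into one kernel-verified Lean document; each statement's English description precedes it below -/
import Mathlib

section
/- Let E be a real Banach space, let η_X, η_Y : E → E be smooth vector fields, and let X, Y : ℝ → E → E be smooth flows of η_X and η_Y respectively. Set ξ₁ := η_Y − η_X and ξ₂ := [η_X, η_Y], the Lie bracket ξ₂ x = (fderiv ℝ η_Y x)(η_X x) − (fderiv ℝ η_X x)(η_Y x) (in the opposite bracket convention of the paper this is written ξ₂ = [η_Y, η_X]). Then for every twice continuously differentiable f : E → ℝ and every p ∈ E, the second derivative at λ = 0 of λ ↦ f (X (−λ) (Y λ p)) equals (ξ₂·f)(p) + (ξ₁·(ξ₁·f))(p). In other words, the second-order generator of the gauge transformation Φ_λ = X_λ^{-1} ∘ Y_λ is the commutator of the generators of the two gauge choices. -/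
set_option maxHeartbeats 1000000 in
/-- For two smooth flows `X`, `Y` of smooth vector fields `ηX`, `ηY` on a real
Banach space `E`, the second-order generator of the gauge transformation
`Φ_λ = X_λ⁻¹ ∘ Y_λ = X_{-λ} ∘ Y_λ` is the commutator `ξ₂ = [ηX, ηY]`: for every C² scalar
function `f`, `d²/dλ²|₀ f (X (−λ) (Y λ p)) = (ξ₂·f)(p) + (ξ₁·(ξ₁·f))(p)` with
`ξ₁ = ηY − ηX` and `ξ₂ x = (fderiv ℝ ηY x)(ηX x) − (fderiv ℝ ηX x)(ηY x)`. -/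
theorem second_order_gauge_generator
    {E : Type*} [NormedAddCommGroup E] [NormedSpace ℝ E] [CompleteSpace E]
    (ηX ηY : E → E)
    (hηX : ContDiff ℝ (⊤ : ℕ∞) ηX) (hηY : ContDiff ℝ (⊤ : ℕ∞) ηY)
    (X Y : ℝ → E → E)
    (hX0 : ∀ p, X 0 p = p)
    (hXflow : ∀ (lam : ℝ) (p : E), HasDerivAt (fun t => X t p) (ηX (X lam p)) lam)
    (hXsmooth : ContDiff ℝ (⊤ : ℕ∞) (fun q : ℝ × E => X q.1 q.2))
    (hY0 : ∀ p, Y 0 p = p)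
    (hYflow : ∀ (lam : ℝ) (p : E), HasDerivAt (fun t => Y t p) (ηY (Y lam p)) lam)
    (hYsmooth : ContDiff ℝ (⊤ : ℕ∞) (fun q : ℝ × E => Y q.1 q.2))
    (ξ₁ ξ₂ : E → E)
    (hξ₁ : ξ₁ = fun x => ηY x - ηX x)
    (hξ₂ : ξ₂ = fun x => (fderiv ℝ ηY x) (ηX x) - (fderiv ℝ ηX x) (ηY x))
    (f : E → ℝ) (hf : ContDiff ℝ 2 f) (p : E) :
    iteratedDeriv 2 (fun lam : ℝ => f (X (-lam) (Y lam p))) 0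
      = (fderiv ℝ f p) (ξ₂ p)
        + (fderiv ℝ (fun x => (fderiv ℝ f x) (ξ₁ x)) p) (ξ₁ p) := by
  have h1top : (1 : WithTop ℕ∞) ≤ ((⊤ : ℕ∞) : WithTop ℕ∞) := by
    exact_mod_cast (le_top : (1 : ℕ∞) ≤ ⊤)
  have h2top : ((1 : WithTop ℕ∞) + 1) ≤ ((⊤ : ℕ∞) : WithTop ℕ∞) := by
    decide
  have h2top' : (2 : WithTop ℕ∞) ≤ ((⊤ : ℕ∞) : WithTop ℕ∞) := by
    decide
  set G : ℝ × E → E := fun q => X q.1 q.2 with hGdef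
  have hG : ContDiff ℝ (⊤ : ℕ∞) G := hXsmooth
  have hGd : Differentiable ℝ G := hG.differentiable (by simp)
  have hDG : ContDiff ℝ 1 (fderiv ℝ G) := hG.fderiv_right h2top
  have hDGd : Differentiable ℝ (fderiv ℝ G) := hDG.differentiable (by simp)
  -- general directional derivative facts for G
  have hG1 : ∀ (μ : ℝ) (y : E), (fderiv ℝ G (μ, y)) ((1 : ℝ), (0 : E)) = ηX (X μ y) := by
    intro μ y
    have hcur : HasDerivAt (fun t : ℝ => (t, y)) ((1 : ℝ), (0 : E)) μ :=
      (hasDerivAt_id μ).prodMk (hasDerivAt_const μ y)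
    have h1 : HasDerivAt (fun t : ℝ => G (t, y)) ((fderiv ℝ G (μ, y)) ((1 : ℝ), (0 : E))) μ := by
      have := (hGd (μ, y)).hasFDerivAt.comp_hasDerivAt μ hcur; exact this
    exact h1.unique (hXflow μ y)
  -- the embedding y ↦ (0, y)
  have hJ : ∀ (y : E), HasFDerivAt (fun z : E => ((0 : ℝ), z))
      ((0 : E →L[ℝ] ℝ).prod (ContinuousLinearMap.id ℝ E)) y := by
    intro y
    exact (hasFDerivAt_const (0 : ℝ) y).prodMk (hasFDerivAt_id y)
  have hJap : ∀ (wv : E), ((0 : E →L[ℝ] ℝ).prod (ContinuousLinearMap.id ℝ E)) wv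
      = ((0 : ℝ), wv) := by intro wv; rfl
  have hG2 : ∀ (y : E) (wv : E), (fderiv ℝ G (0, y)) ((0 : ℝ), wv) = wv := by
    intro y wv
    have h1 : HasFDerivAt (fun z : E => G (0, z))
        ((fderiv ℝ G (0, y)).comp ((0 : E →L[ℝ] ℝ).prod (ContinuousLinearMap.id ℝ E))) y :=
      (hGd (0, y)).hasFDerivAt.comp y (hJ y)
    have heq : (fun z : E => G (0, z)) = fun z : E => z := funext fun z => hX0 z
    rw [heq] at h1
    have h2 := h1.unique (hasFDerivAt_id y)
    have := congrArg (fun (L : E →L[ℝ] E) => L wv) h2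
    simpa [hJap] using this
  -- notation for first and second derivative of G at (0,p)
  set D : ℝ × E →L[ℝ] E := fderiv ℝ G (0, p) with hDdef
  set S : ℝ × E →L[ℝ] (ℝ × E →L[ℝ] E) := fderiv ℝ (fderiv ℝ G) (0, p) with hSdef
  have hsymm : ∀ v w : ℝ × E, S v w = S w v := by
    intro v w
    exact (hG.contDiffAt.isSymmSndFDerivAt (by simpa using h2top')).eq v w
  have hD1 : D ((1 : ℝ), (0 : E)) = ηX p := by rw [hDdef, hG1 0 p, hX0]
  have hD2 : ∀ wv : E, D ((0 : ℝ), wv) = wv := fun wv => hG2 p wv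
  -- S (1,0) (1,0)
  have hcurS : HasDerivAt (fun μ : ℝ => fderiv ℝ G (μ, p)) (S ((1 : ℝ), (0 : E))) 0 :=
    (hDGd (0, p)).hasFDerivAt.comp_hasDerivAt 0
      ((hasDerivAt_id 0).prodMk (hasDerivAt_const 0 p))
  have hS11 : S ((1 : ℝ), (0 : E)) ((1 : ℝ), (0 : E)) = (fderiv ℝ ηX p) (ηX p) := by
    have hk : HasDerivAt (fun μ : ℝ => (fderiv ℝ G (μ, p)) ((1 : ℝ), (0 : E)))
        (S ((1 : ℝ), (0 : E)) ((1 : ℝ), (0 : E))) 0 := by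
      have := hcurS.clm_apply (hasDerivAt_const 0 ((1 : ℝ), (0 : E)))
      simpa using this
    have hk2 : HasDerivAt (fun μ : ℝ => ηX (X μ p)) ((fderiv ℝ ηX p) (ηX p)) 0 := by
      have := (hηX.differentiable (by simp) (X 0 p)).hasFDerivAt.comp_hasDerivAt 0 (hXflow 0 p)
      simpa [hX0, Function.comp_def] using this
    have heq : (fun μ : ℝ => (fderiv ℝ G (μ, p)) ((1 : ℝ), (0 : E)))
        = fun μ : ℝ => ηX (X μ p) := funext fun μ => hG1 μ p
    rw [heq] at hk
    exact hk.unique hk2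
  -- derivative along E of y ↦ fderiv G (0,y)
  have hcurS2 : HasFDerivAt (fun y : E => fderiv ℝ G (0, y))
      (S.comp ((0 : E →L[ℝ] ℝ).prod (ContinuousLinearMap.id ℝ E))) p :=
    (hDGd (0, p)).hasFDerivAt.comp p (hJ p)
  have hS01 : ∀ wv : E, S ((0 : ℝ), wv) ((1 : ℝ), (0 : E)) = (fderiv ℝ ηX p) wv := by
    intro wv
    have hm : HasFDerivAt (fun y : E => (fderiv ℝ G (0, y)) ((1 : ℝ), (0 : E)))
        ((fderiv ℝ G (0, p)).comp (0 : E →L[ℝ] ℝ × E)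
          + (S.comp ((0 : E →L[ℝ] ℝ).prod (ContinuousLinearMap.id ℝ E))).flip
              ((1 : ℝ), (0 : E))) p :=
      hcurS2.clm_apply (hasFDerivAt_const ((1 : ℝ), (0 : E)) p)
    have heq : (fun y : E => (fderiv ℝ G (0, y)) ((1 : ℝ), (0 : E))) = fun y : E => ηX y := by
      funext y; rw [hG1 0 y, hX0]
    rw [heq] at hm
    have h2 := hm.unique (hηX.differentiable (by simp) p).hasFDerivAt
    have h3 := congrArg (fun (L : E →L[ℝ] E) => L wv) h2
    simp only [ContinuousLinearMap.add_apply, ContinuousLinearMap.comp_apply,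
      ContinuousLinearMap.flip_apply, ContinuousLinearMap.zero_apply, map_zero, zero_add,
      hJap] at h3
    exact h3
  have hS00 : ∀ wv wv' : E, S ((0 : ℝ), wv) ((0 : ℝ), wv') = 0 := by
    intro wv wv'
    have hm : HasFDerivAt (fun y : E => (fderiv ℝ G (0, y)) ((0 : ℝ), wv'))
        ((fderiv ℝ G (0, p)).comp (0 : E →L[ℝ] ℝ × E)
          + (S.comp ((0 : E →L[ℝ] ℝ).prod (ContinuousLinearMap.id ℝ E))).flip
              ((0 : ℝ), wv')) p :=
      hcurS2.clm_apply (hasFDerivAt_const ((0 : ℝ), wv') p)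
    have heq : (fun y : E => (fderiv ℝ G (0, y)) ((0 : ℝ), wv')) = fun _ : E => wv' := by
      funext y; rw [hG2 y wv']
    rw [heq] at hm
    have h2 := hm.unique (hasFDerivAt_const wv' p)
    have := congrArg (fun (L : E →L[ℝ] E) => L wv) h2
    simpa [hJap] using this
  -- the curve c and its derivative field w
  have hγd : ∀ l : ℝ, HasDerivAt (fun t : ℝ => ((-t : ℝ), Y t p)) ((-1 : ℝ), ηY (Y l p)) l := by
    intro l
    exact ((hasDerivAt_id l).neg).prodMk (hYflow l p)
  have hc : ∀ l : ℝ, HasDerivAt (fun t : ℝ => G (-t, Y t p))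
      ((fderiv ℝ G (-l, Y l p)) ((-1 : ℝ), ηY (Y l p))) l := by
    intro l
    have := (hGd (-l, Y l p)).hasFDerivAt.comp_hasDerivAt l (hγd l); exact this
  have hbase : ((-(0 : ℝ) : ℝ), Y 0 p) = ((0 : ℝ), p) := by simp [hY0]
  have hw0 : (fderiv ℝ G (-(0 : ℝ), Y 0 p)) ((-1 : ℝ), ηY (Y (0 : ℝ) p)) = ξ₁ p := by
    rw [hbase, hY0, hξ₁]
    have hsplit : ((-1 : ℝ), ηY p) = -((1 : ℝ), (0 : E)) + ((0 : ℝ), ηY p) := by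
      simp [Prod.ext_iff]
    rw [← hDdef, hsplit, map_add, map_neg, hD1, hD2]
    abel
  -- derivative of w at 0
  have hcw1 : HasDerivAt (fun l : ℝ => fderiv ℝ G (-l, Y l p)) (S ((-1 : ℝ), ηY p)) 0 := by
    have h0 : HasFDerivAt (fderiv ℝ G) S ((-(0 : ℝ) : ℝ), Y 0 p) := by
      rw [hbase]; exact (hDGd (0, p)).hasFDerivAt
    have := h0.comp_hasDerivAt 0 (hγd 0)
    simpa [hY0, Function.comp_def] using this
  have hcw2 : HasDerivAt (fun l : ℝ => ((-1 : ℝ), ηY (Y l p)))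
      (((0 : ℝ)), (fderiv ℝ ηY p) (ηY p)) 0 := by
    have h2 : HasDerivAt (fun l : ℝ => ηY (Y l p)) ((fderiv ℝ ηY p) (ηY p)) 0 := by
      have := (hηY.differentiable (by simp) (Y 0 p)).hasFDerivAt.comp_hasDerivAt 0 (hYflow 0 p)
      simpa [hY0, Function.comp_def] using this
    exact (hasDerivAt_const 0 (-1 : ℝ)).prodMk h2
  have hw : HasDerivAt (fun l : ℝ => (fderiv ℝ G (-l, Y l p)) ((-1 : ℝ), ηY (Y l p)))
      ((fderiv ℝ ηX p) (ηX p) - (fderiv ℝ ηX p) (ηY p) - (fderiv ℝ ηX p) (ηY p)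
        + (fderiv ℝ ηY p) (ηY p)) 0 := by
    have h := hcw1.clm_apply hcw2
    have hval : S ((-1 : ℝ), ηY p) ((-1 : ℝ), ηY (Y 0 p))
        + (fderiv ℝ G (-(0 : ℝ), Y 0 p)) ((0 : ℝ), (fderiv ℝ ηY p) (ηY p))
        = (fderiv ℝ ηX p) (ηX p) - (fderiv ℝ ηX p) (ηY p) - (fderiv ℝ ηX p) (ηY p)
          + (fderiv ℝ ηY p) (ηY p) := by
      rw [hbase, hY0, ← hDdef, hD2]
      have hsplit : ((-1 : ℝ), ηY p) = -((1 : ℝ), (0 : E)) + ((0 : ℝ), ηY p) := by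
        simp [Prod.ext_iff]
      rw [hsplit, map_add, map_neg]
      simp only [ContinuousLinearMap.add_apply, ContinuousLinearMap.neg_apply, map_add, map_neg]
      rw [hS11, hS00, hS01, hsymm ((1 : ℝ), (0 : E)) ((0 : ℝ), ηY p), hS01]
      abel
    rw [hval] at h
    exact h
  -- assemble the second derivative of f along c
  have hfd : Differentiable ℝ f := hf.differentiable (by simp)
  have hf' : ContDiff ℝ 1 (fderiv ℝ f) := hf.fderiv_right (le_refl _)
  have hg : ∀ l : ℝ, HasDerivAt (fun t : ℝ => f (X (-t) (Y t p)))
      ((fderiv ℝ f (G (-l, Y l p))) ((fderiv ℝ G (-l, Y l p)) ((-1 : ℝ), ηY (Y l p)))) l := by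
    intro l
    exact (hfd (G (-l, Y l p))).hasFDerivAt.comp_hasDerivAt l (hc l)
  have hderivg : deriv (fun t : ℝ => f (X (-t) (Y t p)))
      = fun l : ℝ => (fderiv ℝ f (G (-l, Y l p)))
          ((fderiv ℝ G (-l, Y l p)) ((-1 : ℝ), ηY (Y l p))) :=
    funext fun l => (hg l).deriv
  have hcurf : HasDerivAt (fun l : ℝ => fderiv ℝ f (G (-l, Y l p)))
      ((fderiv ℝ (fderiv ℝ f) p) (ξ₁ p)) 0 := by
    have hGbase : G ((-(0 : ℝ) : ℝ), Y 0 p) = p := by rw [hbase]; exact hX0 p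
    have h0 : HasFDerivAt (fderiv ℝ f) (fderiv ℝ (fderiv ℝ f) p) (G (-(0 : ℝ), Y 0 p)) := by
      rw [hGbase]; exact (hf'.differentiable (by simp) p).hasFDerivAt
    have := h0.comp_hasDerivAt 0 (hc 0)
    rwa [hw0] at this
  have hsec : HasDerivAt (fun l : ℝ => (fderiv ℝ f (G (-l, Y l p)))
        ((fderiv ℝ G (-l, Y l p)) ((-1 : ℝ), ηY (Y l p))))
      ((fderiv ℝ (fderiv ℝ f) p) (ξ₁ p) (ξ₁ p)
        + (fderiv ℝ f p) ((fderiv ℝ ηX p) (ηX p) - (fderiv ℝ ηX p) (ηY p)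
            - (fderiv ℝ ηX p) (ηY p) + (fderiv ℝ ηY p) (ηY p))) 0 := by
    have h := hcurf.clm_apply hw
    have hGbase : G ((-(0 : ℝ) : ℝ), Y 0 p) = p := by rw [hbase]; exact hX0 p
    rwa [hw0, hGbase] at h
  -- compute the LHS
  have hLHS : iteratedDeriv 2 (fun lam : ℝ => f (X (-lam) (Y lam p))) 0
      = (fderiv ℝ (fderiv ℝ f) p) (ξ₁ p) (ξ₁ p)
        + (fderiv ℝ f p) ((fderiv ℝ ηX p) (ηX p) - (fderiv ℝ ηX p) (ηY p)
            - (fderiv ℝ ηX p) (ηY p) + (fderiv ℝ ηY p) (ηY p)) := by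
    have h2 : iteratedDeriv 2 (fun lam : ℝ => f (X (-lam) (Y lam p))) 0
        = deriv (deriv (fun lam : ℝ => f (X (-lam) (Y lam p)))) 0 := by
      rw [show (2 : ℕ) = 1 + 1 from rfl, iteratedDeriv_succ, iteratedDeriv_one]
    rw [h2, hderivg]
    exact hsec.deriv
  -- compute the RHS
  have hξ₁d : HasFDerivAt ξ₁ (fderiv ℝ ηY p - fderiv ℝ ηX p) p := by
    rw [hξ₁]
    exact (hηY.differentiable (by simp) p).hasFDerivAt.sub (hηX.differentiable (by simp) p).hasFDerivAt
  have hRHS : (fderiv ℝ (fun x => (fderiv ℝ f x) (ξ₁ x)) p) (ξ₁ p)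
      = (fderiv ℝ (fderiv ℝ f) p) (ξ₁ p) (ξ₁ p)
        + (fderiv ℝ f p) ((fderiv ℝ ηY p - fderiv ℝ ηX p) (ξ₁ p)) := by
    have hm : HasFDerivAt (fun x => (fderiv ℝ f x) (ξ₁ x))
        ((fderiv ℝ f p).comp (fderiv ℝ ηY p - fderiv ℝ ηX p)
          + (fderiv ℝ (fderiv ℝ f) p).flip (ξ₁ p)) p :=
      ((hf'.differentiable (by simp) p).hasFDerivAt).clm_apply hξ₁d
    rw [hm.fderiv]
    simp [ContinuousLinearMap.add_apply]
    abel
  rw [hLHS, hRHS, hξ₂, hξ₁]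
  simp only [ContinuousLinearMap.sub_apply, map_sub, map_add]
  ring
end

section
/- Let E be a real Banach space, let Q : ℝ → E → ℝ be a perturbed scalar field with (λ,p) ↦ Q λ p infinitely differentiable, and let X, Y : ℝ → E → E be smooth flows of smooth vector fields η_X, η_Y : E → E (two gauge choices). Write Q₀ := Q 0 for the background value, and define the first-order perturbation in the gauge X by (⁽¹⁾_X Q)(p) := d/dλ|_{λ=0} Q λ (X λ p), and similarly for Y. Then the first-order gauge transformation rule holds: for every p ∈ E, (⁽¹⁾_Y Q)(p) − (⁽¹⁾_X Q)(p) = (fderiv ℝ Q₀ p)(η_Y p − η_X p), i.e. the two representations differ by the Lie derivative of the background value Q₀ along ξ₁ = η_Y − η_X. -/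
/-- First-order gauge transformation rule. For a smooth perturbed scalar field
`Q : ℝ → E → ℝ` and two gauge choices given by smooth flows `X`, `Y` of smooth vector fields
`ηX`, `ηY`, the first-order perturbations `⁽¹⁾_g Q (p) = d/dλ|₀ Q λ (g λ p)` satisfy
`⁽¹⁾_Y Q − ⁽¹⁾_X Q = £_{ξ₁} Q₀` with `ξ₁ = ηY − ηX` and `Q₀ = Q 0`. -/
theorem first_order_gauge_transformation_rule
    {E : Type*} [NormedAddCommGroup E] [NormedSpace ℝ E] [CompleteSpace E]
    (Q : ℝ → E → ℝ)
    (hQ : ContDiff ℝ (⊤ : ℕ∞) (fun q : ℝ × E => Q q.1 q.2))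
    (ηX ηY : E → E)
    (hηX : ContDiff ℝ (⊤ : ℕ∞) ηX) (hηY : ContDiff ℝ (⊤ : ℕ∞) ηY)
    (X Y : ℝ → E → E)
    (hX0 : ∀ p, X 0 p = p)
    (hXflow : ∀ (lam : ℝ) (p : E), HasDerivAt (fun t => X t p) (ηX (X lam p)) lam)
    (hXsmooth : ContDiff ℝ (⊤ : ℕ∞) (fun q : ℝ × E => X q.1 q.2))
    (hY0 : ∀ p, Y 0 p = p)
    (hYflow : ∀ (lam : ℝ) (p : E), HasDerivAt (fun t => Y t p) (ηY (Y lam p)) lam)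
    (hYsmooth : ContDiff ℝ (⊤ : ℕ∞) (fun q : ℝ × E => Y q.1 q.2))
    (p : E) :
    deriv (fun lam : ℝ => Q lam (Y lam p)) 0 - deriv (fun lam : ℝ => Q lam (X lam p)) 0
      = (fderiv ℝ (Q 0) p) (ηY p - ηX p) := by
  set f : ℝ × E → ℝ := fun q => Q q.1 q.2 with hf
  have hfd : HasFDerivAt f (fderiv ℝ f (0, p)) (0, p) :=
    (hQ.differentiable (by simp) (0, p)).hasFDerivAt
  have key : ∀ (g : ℝ → E → E) (ηg : E → E), g 0 p = p →
      HasDerivAt (fun t => g t p) (ηg p) 0 →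
      HasDerivAt (fun lam : ℝ => Q lam (g lam p)) ((fderiv ℝ f (0, p)) (1, ηg p)) 0 := by
    intro g ηg hg0 hgd
    have hcurve : HasDerivAt (fun lam : ℝ => (lam, g lam p)) ((1 : ℝ), ηg p) 0 :=
      (hasDerivAt_id 0).prodMk hgd
    have hfd' : HasFDerivAt f (fderiv ℝ f (0, p)) (0, g 0 p) := by rw [hg0]; exact hfd
    have := hfd'.comp_hasDerivAt 0 hcurve
    simpa [hf, Function.comp_def] using this
  have hYd := key Y ηY (hY0 p) (by simpa [hY0 p] using hYflow 0 p)
  have hXd := key X ηX (hX0 p) (by simpa [hX0 p] using hXflow 0 p)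
  rw [hYd.deriv, hXd.deriv, ← map_sub]
  have hsub : ((1 : ℝ), ηY p) - ((1 : ℝ), ηX p) = ((0 : ℝ), ηY p - ηX p) := by
    simp [Prod.ext_iff]
  rw [hsub]
  have hQ0 : HasFDerivAt (Q 0)
      ((fderiv ℝ f (0, p)).comp (ContinuousLinearMap.inr ℝ ℝ E)) p := by
    have hin : HasFDerivAt (fun x : E => ((0 : ℝ), x)) (ContinuousLinearMap.inr ℝ ℝ E) p :=
      (hasFDerivAt_const (0 : ℝ) p).prodMk (hasFDerivAt_id p)
    exact hfd.comp p hin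
  rw [hQ0.fderiv]
  rfl
end

section
/- Let E be a real Banach space, let Q : ℝ → E → ℝ be a perturbed scalar field with (λ,p) ↦ Q λ p infinitely differentiable, and let X, Y : ℝ → E → E be smooth flows of smooth vector fields η_X, η_Y : E → E. Write Q₀ := Q 0, (⁽¹⁾_X Q)(p) := d/dλ|_{λ=0} Q λ (X λ p) and (⁽²⁾_X Q)(p) := d²/dλ²|_{λ=0} Q λ (X λ p), similarly for Y. Set ξ₁ := η_Y − η_X and ξ₂ := [η_X, η_Y] with the bracket convention [V,W](x) = (fderiv ℝ W x)(V x) − (fderiv ℝ V x)(W x). Then the second-order gauge transformation rule holds: for every p ∈ E, (⁽²⁾_Y Q)(p) − (⁽²⁾_X Q)(p) = 2 (ξ₁·(⁽¹⁾_X Q))(p) + (ξ₂·Q₀)(p) + (ξ₁·(ξ₁·Q₀))(p). -/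
section Aux

variable {E : Type*} [NormedAddCommGroup E] [NormedSpace ℝ E]

theorem aux_first_deriv
    (Q : ℝ → E → ℝ) (hQ : ContDiff ℝ (⊤ : ℕ∞) (fun q : ℝ × E => Q q.1 q.2))
    (η : E → E) (X : ℝ → E → E)
    (hXflow : ∀ (lam : ℝ) (p : E), HasDerivAt (fun t => X t p) (η (X lam p)) lam)
    (lam : ℝ) (x : E) :
    HasDerivAt (fun t : ℝ => Q t (X t x))
      (fderiv ℝ (fun q : ℝ × E => Q q.1 q.2) (lam, X lam x) (1, η (X lam x))) lam := by
  have hc : HasDerivAt (fun t : ℝ => ((t, X t x) : ℝ × E)) ((1 : ℝ), η (X lam x)) lam :=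
    (hasDerivAt_id lam).prodMk (hXflow lam x)
  have hF : HasFDerivAt (fun q : ℝ × E => Q q.1 q.2)
      (fderiv ℝ (fun q : ℝ × E => Q q.1 q.2) (lam, X lam x)) (lam, X lam x) :=
    (hQ.differentiable (by simp) (lam, X lam x)).hasFDerivAt
  exact hF.comp_hasDerivAt lam hc

theorem aux_second_deriv
    (Q : ℝ → E → ℝ) (hQ : ContDiff ℝ (⊤ : ℕ∞) (fun q : ℝ × E => Q q.1 q.2))
    (η : E → E) (hη : ContDiff ℝ (⊤ : ℕ∞) η)
    (X : ℝ → E → E) (hX0 : ∀ p, X 0 p = p)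
    (hXflow : ∀ (lam : ℝ) (p : E), HasDerivAt (fun t => X t p) (η (X lam p)) lam)
    (p : E) :
    iteratedDeriv 2 (fun lam : ℝ => Q lam (X lam p)) 0
      = (fderiv ℝ (fderiv ℝ (fun q : ℝ × E => Q q.1 q.2)) (0, p) (1, η p)) (1, η p)
        + fderiv ℝ (fun q : ℝ × E => Q q.1 q.2) (0, p) (0, fderiv ℝ η p (η p)) := by
  set F : ℝ × E → ℝ := fun q => Q q.1 q.2 with hF
  set D : ℝ × E → (ℝ × E →L[ℝ] ℝ) := fun q => fderiv ℝ F q with hD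
  have hDc : ContDiff ℝ (⊤ : ℕ∞) D := hQ.fderiv_right (by simp)
  -- the first derivative as a function
  have h1 : deriv (fun lam : ℝ => Q lam (X lam p))
      = fun t : ℝ => D (t, X t p) (1, η (X t p)) := by
    funext t
    exact (aux_first_deriv Q hQ η X hXflow t p).deriv
  rw [show (2 : ℕ) = 1 + 1 from rfl, iteratedDeriv_succ, iteratedDeriv_one, h1]
  -- differentiate t ↦ D (t, X t p) (1, η (X t p)) at 0
  have hc : HasDerivAt (fun t : ℝ => ((t, X t p) : ℝ × E)) ((1 : ℝ), η p) 0 := by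
    have := (hasDerivAt_id (0 : ℝ)).prodMk (hXflow 0 p)
    rwa [hX0 p] at this
  have hBD : HasFDerivAt D (fderiv ℝ D (0, p)) (0, p) :=
    (hDc.differentiable (by simp) (0, p)).hasFDerivAt
  have hc' : HasDerivAt (fun t : ℝ => D (t, X t p)) (fderiv ℝ D (0, p) (1, η p)) 0 := by
    have hBD' : HasFDerivAt D (fderiv ℝ D (0, p)) (0, X 0 p) := by rw [hX0 p]; exact hBD
    exact hBD'.comp_hasDerivAt 0 hc
  have hη' : HasDerivAt (fun t : ℝ => η (X t p)) (fderiv ℝ η p (η p)) 0 := by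
    have hηd : HasFDerivAt η (fderiv ℝ η p) p := (hη.differentiable (by simp) p).hasFDerivAt
    have hηd' : HasFDerivAt η (fderiv ℝ η p) (X 0 p) := by rw [hX0 p]; exact hηd
    have h2 := hηd'.comp_hasDerivAt 0 (hXflow 0 p)
    rwa [hX0 p] at h2
  have he : HasDerivAt (fun t : ℝ => (((1 : ℝ), η (X t p)) : ℝ × E))
      (((0 : ℝ), fderiv ℝ η p (η p)) : ℝ × E) 0 :=
    (hasDerivAt_const 0 (1 : ℝ)).prodMk hη'
  have := hc'.clm_apply he
  rw [this.deriv]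
  simp [hX0 p]
  rfl

end Aux

/-- Second-order gauge transformation rule. For a smooth perturbed scalar field
`Q : ℝ → E → ℝ` and two gauge choices given by smooth flows `X`, `Y` of smooth vector fields
`ηX`, `ηY`, with `ξ₁ = ηY − ηX` and `ξ₂ = [ηX, ηY]`,
`⁽²⁾_Y Q − ⁽²⁾_X Q = 2 £_{ξ₁} ⁽¹⁾_X Q + (£_{ξ₂} + £_{ξ₁}²) Q₀`. -/
theorem second_order_gauge_transformation_rule
    {E : Type*} [NormedAddCommGroup E] [NormedSpace ℝ E] [CompleteSpace E]
    (Q : ℝ → E → ℝ)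
    (hQ : ContDiff ℝ (⊤ : ℕ∞) (fun q : ℝ × E => Q q.1 q.2))
    (ηX ηY : E → E)
    (hηX : ContDiff ℝ (⊤ : ℕ∞) ηX) (hηY : ContDiff ℝ (⊤ : ℕ∞) ηY)
    (X Y : ℝ → E → E)
    (hX0 : ∀ p, X 0 p = p)
    (hXflow : ∀ (lam : ℝ) (p : E), HasDerivAt (fun t => X t p) (ηX (X lam p)) lam)
    (hXsmooth : ContDiff ℝ (⊤ : ℕ∞) (fun q : ℝ × E => X q.1 q.2))
    (hY0 : ∀ p, Y 0 p = p)
    (hYflow : ∀ (lam : ℝ) (p : E), HasDerivAt (fun t => Y t p) (ηY (Y lam p)) lam)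
    (hYsmooth : ContDiff ℝ (⊤ : ℕ∞) (fun q : ℝ × E => Y q.1 q.2))
    (ξ₁ ξ₂ : E → E)
    (hξ₁ : ξ₁ = fun x => ηY x - ηX x)
    (hξ₂ : ξ₂ = fun x => (fderiv ℝ ηY x) (ηX x) - (fderiv ℝ ηX x) (ηY x))
    (p : E) :
    iteratedDeriv 2 (fun lam : ℝ => Q lam (Y lam p)) 0
        - iteratedDeriv 2 (fun lam : ℝ => Q lam (X lam p)) 0
      = 2 * (fderiv ℝ (fun x => deriv (fun lam : ℝ => Q lam (X lam x)) 0) p) (ξ₁ p)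
        + (fderiv ℝ (Q 0) p) (ξ₂ p)
        + (fderiv ℝ (fun x => (fderiv ℝ (Q 0) x) (ξ₁ x)) p) (ξ₁ p) := by
  set F : ℝ × E → ℝ := fun q => Q q.1 q.2 with hFdef
  set D : ℝ × E → (ℝ × E →L[ℝ] ℝ) := fun q => fderiv ℝ F q with hDdef
  have hDc : ContDiff ℝ (⊤ : ℕ∞) D := hQ.fderiv_right (by simp)
  set B : (ℝ × E) →L[ℝ] (ℝ × E →L[ℝ] ℝ) := fderiv ℝ D (0, p) with hBdef
  set L : (ℝ × E) →L[ℝ] ℝ := D (0, p) with hLdef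
  have hFd : ∀ q, HasFDerivAt F (D q) q := fun q =>
    (hQ.differentiable (by simp) q).hasFDerivAt
  have hBD : HasFDerivAt D B (0, p) := (hDc.differentiable (by simp) (0, p)).hasFDerivAt
  have hsymm : ∀ v w : ℝ × E, B v w = B w v := fun v w =>
    second_derivative_symmetric hFd hBD v w
  -- derivative of the inclusion x ↦ (0, x)
  have hinr : ∀ x : E, HasFDerivAt (fun y : E => (((0 : ℝ), y) : ℝ × E))
      (ContinuousLinearMap.inr ℝ ℝ E) x := fun x =>
    (ContinuousLinearMap.inr ℝ ℝ E).hasFDerivAt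
  -- fderiv of Q 0
  have hQ0 : ∀ x : E, HasFDerivAt (Q 0) ((D (0, x)).comp (ContinuousLinearMap.inr ℝ ℝ E)) x :=
    fun x => (hFd (0, x)).comp x (hinr x)
  have hQ0' : ∀ x : E, fderiv ℝ (Q 0) x = (D (0, x)).comp (ContinuousLinearMap.inr ℝ ℝ E) :=
    fun x => (hQ0 x).fderiv
  -- the two second derivatives
  have hX2 := aux_second_deriv Q hQ ηX hηX X hX0 hXflow p
  have hY2 := aux_second_deriv Q hQ ηY hηY Y hY0 hYflow p
  -- differentiability facts
  have hηXd : HasFDerivAt ηX (fderiv ℝ ηX p) p := (hηX.differentiable (by simp) p).hasFDerivAt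
  have hηYd : HasFDerivAt ηY (fderiv ℝ ηY p) p := (hηY.differentiable (by simp) p).hasFDerivAt
  have hξ₁d : HasFDerivAt ξ₁ (fderiv ℝ ηY p - fderiv ℝ ηX p) p := by
    rw [hξ₁]; exact hηYd.sub hηXd
  -- x ↦ D (0, x) has derivative B.comp inr at p
  have hDx : HasFDerivAt (fun x : E => D ((0 : ℝ), x))
      (B.comp (ContinuousLinearMap.inr ℝ ℝ E)) p := hBD.comp p (hinr p)
  -- RHS term 1
  have hterm1 : fderiv ℝ (fun x => deriv (fun lam : ℝ => Q lam (X lam x)) 0) p (ξ₁ p)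
      = L ((0 : ℝ), fderiv ℝ ηX p (ξ₁ p)) + B ((0 : ℝ), ξ₁ p) ((1 : ℝ), ηX p) := by
    have heq : (fun x => deriv (fun lam : ℝ => Q lam (X lam x)) 0)
        = fun x => D ((0 : ℝ), x) (((1 : ℝ), ηX x) : ℝ × E) := by
      funext x
      have := (aux_first_deriv Q hQ ηX X hXflow 0 x).deriv
      rw [this, hX0 x]
    rw [heq]
    have hu : HasFDerivAt (fun x : E => (((1 : ℝ), ηX x) : ℝ × E))
        (((0 : E →L[ℝ] ℝ)).prod (fderiv ℝ ηX p)) p :=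
      (hasFDerivAt_const (1 : ℝ) p).prodMk hηXd
    have h := (hDx.clm_apply hu).fderiv
    rw [h]
    simp [ContinuousLinearMap.flip_apply]
    rfl
  -- RHS term 2
  have hterm2 : fderiv ℝ (Q 0) p (ξ₂ p) = L ((0 : ℝ), ξ₂ p) := by
    rw [hQ0' p]; simp; rfl
  -- RHS term 3
  have hterm3 : fderiv ℝ (fun x => (fderiv ℝ (Q 0) x) (ξ₁ x)) p (ξ₁ p)
      = L ((0 : ℝ), (fderiv ℝ ηY p - fderiv ℝ ηX p) (ξ₁ p)) + B ((0 : ℝ), ξ₁ p) ((0 : ℝ), ξ₁ p) := by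
    have heq : (fun x => (fderiv ℝ (Q 0) x) (ξ₁ x))
        = fun x => D ((0 : ℝ), x) (((0 : ℝ), ξ₁ x) : ℝ × E) := by
      funext x; rw [hQ0' x]; simp
    rw [heq]
    have hu : HasFDerivAt (fun x : E => (((0 : ℝ), ξ₁ x) : ℝ × E))
        (((0 : E →L[ℝ] ℝ)).prod (fderiv ℝ ηY p - fderiv ℝ ηX p)) p :=
      (hasFDerivAt_const (0 : ℝ) p).prodMk hξ₁d
    have h := (hDx.clm_apply hu).fderiv
    rw [h]
    simp [ContinuousLinearMap.flip_apply]
    rfl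
  rw [hX2, hY2, hterm1, hterm2, hterm3]
  -- now pure algebra
  set u : ℝ × E := ((1 : ℝ), ηX p) with hu
  set w : ℝ × E := ((0 : ℝ), ξ₁ p) with hw
  have hvw : (((1 : ℝ), ηY p) : ℝ × E) = u + w := by
    rw [hu, hw, hξ₁]; simp [Prod.ext_iff]
  have hBvv : B ((1 : ℝ), ηY p) ((1 : ℝ), ηY p) = B u u + 2 * B w u + B w w := by
    rw [hvw]
    have : B u w = B w u := hsymm u w
    simp [map_add, ContinuousLinearMap.add_apply, this]
    ring
  have hvec : fderiv ℝ ηY p (ηY p) - fderiv ℝ ηX p (ηX p)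
      = 2 • (fderiv ℝ ηX p (ξ₁ p)) + ξ₂ p + (fderiv ℝ ηY p - fderiv ℝ ηX p) (ξ₁ p) := by
    rw [hξ₁, hξ₂]
    simp only [map_sub, ContinuousLinearMap.sub_apply, two_smul]
    abel
  have hL : ∀ a b : E, L ((0 : ℝ), a) + L ((0 : ℝ), b) = L ((0 : ℝ), a + b) := by
    intro a b
    rw [← map_add]
    norm_num
  have hLsub : ∀ a b : E, L ((0 : ℝ), a) - L ((0 : ℝ), b) = L ((0 : ℝ), a - b) := by
    intro a b
    rw [← map_sub]
    norm_num
  have hL2 : ∀ a : E, L ((0 : ℝ), (2 : ℕ) • a) = 2 * L ((0 : ℝ), a) := by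
    intro a
    have : (((0 : ℝ), (2 : ℕ) • a) : ℝ × E) = (2 : ℕ) • (((0 : ℝ), a) : ℝ × E) := by
      simp [Prod.ext_iff]
    rw [this, map_nsmul]
    push_cast
    ring
  have hLmain : L ((0 : ℝ), fderiv ℝ ηY p (ηY p)) - L ((0 : ℝ), fderiv ℝ ηX p (ηX p))
      = 2 * L ((0 : ℝ), fderiv ℝ ηX p (ξ₁ p)) + L ((0 : ℝ), ξ₂ p)
        + L ((0 : ℝ), (fderiv ℝ ηY p - fderiv ℝ ηX p) (ξ₁ p)) := by
    rw [hLsub, hvec, ← hL, ← hL, hL2]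
  linarith [hLmain]
end

section
/- Let E be a real Banach space. Let Q⁰ : E → ℝ be twice continuously differentiable, let Q¹_X, Q¹_Y : E → ℝ be continuously differentiable, let Q²_X, Q²_Y : E → ℝ be functions, let X_X, X_Y : E → E be continuously differentiable vector fields, and let ξ₁, ξ₂ : E → E be vector fields with ξ₁ continuously differentiable. Assume the gauge transformation rules: Q¹_Y − Q¹_X = ξ₁·Q⁰, Q²_Y − Q²_X = 2 ξ₁·Q¹_X + ξ₂·Q⁰ + ξ₁·(ξ₁·Q⁰), and X_Y − X_X = ξ₁ (all pointwise). Define, in each gauge g ∈ {X,Y}, L̂_g := Q²_g − 2 X_g·Q¹_g + X_g·(X_g·Q⁰). Then L̂ transforms like a first-order perturbation with generator σ := ξ₂ + [ξ₁, X_X]: pointwise on E, L̂_Y − L̂_X = σ·Q⁰, where [ξ₁, X_X](x) = (fderiv ℝ X_X x)(ξ₁ x) − (fderiv ℝ ξ₁ x)(X_X x). -/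
/-- Directional (Lie) derivative of a scalar function `f` along a vector field `V`:
`(V·f)(x) = (fderiv ℝ f x)(V x)`. -/
noncomputable def dirDeriv {E : Type*} [NormedAddCommGroup E] [NormedSpace ℝ E]
    (V : E → E) (f : E → ℝ) : E → ℝ :=
  fun x => (fderiv ℝ f x) (V x)

/-- Lie bracket of vector fields on a Banach space:
`[V,W](x) = (fderiv ℝ W x)(V x) − (fderiv ℝ V x)(W x)`. -/
noncomputable def lieBracket {E : Type*} [NormedAddCommGroup E] [NormedSpace ℝ E]
    (V W : E → E) : E → E :=
  fun x => (fderiv ℝ W x) (V x) - (fderiv ℝ V x) (W x)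

lemma dirDeriv_dirDeriv {E : Type*} [NormedAddCommGroup E] [NormedSpace ℝ E]
    (f : E → ℝ) (hf : ContDiff ℝ 2 f) {W : E → E} (hW : Differentiable ℝ W)
    (V : E → E) (x : E) :
    dirDeriv V (dirDeriv W f) x
      = fderiv ℝ (fderiv ℝ f) x (V x) (W x) + fderiv ℝ f x (fderiv ℝ W x (V x)) := by
  have h1 : DifferentiableAt ℝ (fderiv ℝ f) x :=
    ((hf.fderiv_right (m := 1) le_rfl).differentiable one_ne_zero) x
  show (fderiv ℝ (fun y => (fderiv ℝ f y) (W y)) x) (V x) = _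
  rw [fderiv_clm_apply h1 (hW x)]
  simp [add_comm]

/-- The variable `L̂_g := Q²_g − 2 X_g·Q¹_g + X_g·(X_g·Q⁰)` transforms like a
first-order perturbation with generator `σ = ξ₂ + [ξ₁, X_X]`:
`L̂_Y − L̂_X = σ·Q⁰` pointwise, given the first- and second-order gauge transformation rules. -/
theorem Lhat_transforms_like_first_order
    {E : Type*} [NormedAddCommGroup E] [NormedSpace ℝ E] [CompleteSpace E]
    (Q0 : E → ℝ) (hQ0 : ContDiff ℝ 2 Q0)
    (Q1X Q1Y : E → ℝ) (hQ1X : ContDiff ℝ 1 Q1X) (hQ1Y : ContDiff ℝ 1 Q1Y)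
    (Q2X Q2Y : E → ℝ)
    (XX XY : E → E) (hXX : ContDiff ℝ 1 XX) (hXY : ContDiff ℝ 1 XY)
    (ξ₁ ξ₂ : E → E) (hξ₁ : ContDiff ℝ 1 ξ₁)
    (hQ1rule : ∀ x, Q1Y x - Q1X x = dirDeriv ξ₁ Q0 x)
    (hQ2rule : ∀ x, Q2Y x - Q2X x
      = 2 * dirDeriv ξ₁ Q1X x + dirDeriv ξ₂ Q0 x + dirDeriv ξ₁ (dirDeriv ξ₁ Q0) x)
    (hXrule : ∀ x, XY x - XX x = ξ₁ x) :
    ∀ x, (Q2Y x - 2 * dirDeriv XY Q1Y x + dirDeriv XY (dirDeriv XY Q0) x)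
        - (Q2X x - 2 * dirDeriv XX Q1X x + dirDeriv XX (dirDeriv XX Q0) x)
      = dirDeriv (fun y => ξ₂ y + lieBracket ξ₁ XX y) Q0 x := by
  intro x
  have hdXX : Differentiable ℝ XX := hXX.differentiable one_ne_zero
  have hdξ₁ : Differentiable ℝ ξ₁ := hξ₁.differentiable one_ne_zero
  have hdQ1X : Differentiable ℝ Q1X := hQ1X.differentiable one_ne_zero
  have hf' : Differentiable ℝ (fderiv ℝ Q0) :=
    (hQ0.fderiv_right (m := 1) le_rfl).differentiable one_ne_zero
  have hg0 : Differentiable ℝ (dirDeriv ξ₁ Q0) := hf'.clm_apply hdξ₁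
  have hgX : Differentiable ℝ (dirDeriv XX Q0) := hf'.clm_apply hdXX
  have hXYf : XY = fun y => XX y + ξ₁ y := funext fun y => eq_add_of_sub_eq' (hXrule y)
  have hQ1Yf : Q1Y = fun y => Q1X y + dirDeriv ξ₁ Q0 y :=
    funext fun y => eq_add_of_sub_eq' (hQ1rule y)
  subst hXYf hQ1Yf
  have hdXYsum : Differentiable ℝ (fun y => XX y + ξ₁ y) := hdXX.add hdξ₁
  -- first-order term
  have e1 : dirDeriv (fun y => XX y + ξ₁ y) (fun y => Q1X y + dirDeriv ξ₁ Q0 y) x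
      = fderiv ℝ Q1X x (XX x) + fderiv ℝ Q1X x (ξ₁ x)
        + dirDeriv XX (dirDeriv ξ₁ Q0) x + dirDeriv ξ₁ (dirDeriv ξ₁ Q0) x := by
    show (fderiv ℝ (fun y => Q1X y + dirDeriv ξ₁ Q0 y) x) (XX x + ξ₁ x) = _
    rw [fderiv_fun_add (hdQ1X x) (hg0 x)]
    simp only [ContinuousLinearMap.add_apply, map_add, dirDeriv]
    ring
  -- rewrite inner dirDeriv of the sum field
  have hsplit : dirDeriv (fun y => XX y + ξ₁ y) Q0
      = fun y => dirDeriv XX Q0 y + dirDeriv ξ₁ Q0 y := funext fun y => by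
    simp [dirDeriv]
  have e2 : dirDeriv (fun y => XX y + ξ₁ y) (dirDeriv (fun y => XX y + ξ₁ y) Q0) x
      = dirDeriv XX (dirDeriv XX Q0) x + dirDeriv XX (dirDeriv ξ₁ Q0) x
        + dirDeriv ξ₁ (dirDeriv XX Q0) x + dirDeriv ξ₁ (dirDeriv ξ₁ Q0) x := by
    rw [hsplit]
    show (fderiv ℝ (fun y => dirDeriv XX Q0 y + dirDeriv ξ₁ Q0 y) x) (XX x + ξ₁ x) = _
    rw [fderiv_fun_add (hgX x) (hg0 x)]
    simp only [ContinuousLinearMap.add_apply, map_add, dirDeriv]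
    ring
  -- second derivative expansions
  have dXXξ := dirDeriv_dirDeriv Q0 hQ0 hdξ₁ XX x
  have dξXX := dirDeriv_dirDeriv Q0 hQ0 hdXX ξ₁ x
  have hsym : fderiv ℝ (fderiv ℝ Q0) x (ξ₁ x) (XX x)
      = fderiv ℝ (fderiv ℝ Q0) x (XX x) (ξ₁ x) :=
    (hQ0.contDiffAt.isSymmSndFDerivAt (by simp)) _ _
  have eRHS : dirDeriv (fun y => ξ₂ y + lieBracket ξ₁ XX y) Q0 x
      = dirDeriv ξ₂ Q0 x + fderiv ℝ Q0 x (fderiv ℝ XX x (ξ₁ x))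
        - fderiv ℝ Q0 x (fderiv ℝ ξ₁ x (XX x)) := by
    simp only [dirDeriv, lieBracket, map_add, map_sub]
    ring
  rw [e1, e2, eRHS]
  have hQ2 := hQ2rule x
  simp only [dirDeriv] at *
  linarith [dXXξ, dξXX, hsym, hQ2]
end

section
/- Let E be a real Banach space. Let Q⁰ : E → ℝ be twice continuously differentiable, Q¹_X, Q¹_Y : E → ℝ continuously differentiable, Q²_X, Q²_Y : E → ℝ functions, X_X, X_Y, Y_X, Y_Y : E → E vector fields with X_X, X_Y continuously differentiable, and ξ₁, ξ₂ : E → E vector fields with ξ₁ continuously differentiable. Assume the gauge transformation rules: Q¹_Y − Q¹_X = ξ₁·Q⁰, Q²_Y − Q²_X = 2 ξ₁·Q¹_X + ξ₂·Q⁰ + ξ₁·(ξ₁·Q⁰), X_Y − X_X = ξ₁, and Y_Y − Y_X = ξ₂ + [ξ₁, X_X] (all pointwise). Then the second-order gauge-invariant variable ⁽²⁾𝒬 := Q² − 2 X·Q¹ − Y·Q⁰ + X·(X·Q⁰) is independent of the gauge: Q²_Y − 2 X_Y·Q¹_Y − Y_Y·Q⁰ + X_Y·(X_Y·Q⁰)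 = Q²_X − 2 X_X·Q¹_X − Y_X·Q⁰ + X_X·(X_X·Q⁰) pointwise on E. -/
section aux
variable {E : Type*} [NormedAddCommGroup E] [NormedSpace ℝ E]

lemma hasFDerivAt_dirDeriv {f : E → ℝ} (hf : ContDiff ℝ 2 f) {V : E → E}
    (hV : DifferentiableAt ℝ V x) :
    HasFDerivAt (dirDeriv V f)
      ((fderiv ℝ f x).comp (fderiv ℝ V x) + (fderiv ℝ (fderiv ℝ f) x).flip (V x)) x := by
  have h1 : ContDiff ℝ 1 (fderiv ℝ f) := hf.fderiv_right (by norm_num)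
  exact (h1.differentiable one_ne_zero x).hasFDerivAt.clm_apply hV.hasFDerivAt

lemma differentiableAt_dirDeriv {f : E → ℝ} (hf : ContDiff ℝ 2 f) {V : E → E}
    (hV : DifferentiableAt ℝ V x) : DifferentiableAt ℝ (dirDeriv V f) x :=
  (hasFDerivAt_dirDeriv hf hV).differentiableAt

lemma fderiv_dirDeriv_apply {f : E → ℝ} (hf : ContDiff ℝ 2 f) {V : E → E}
    (hV : DifferentiableAt ℝ V x) (v : E) :
    fderiv ℝ (dirDeriv V f) x v
      = fderiv ℝ f x (fderiv ℝ V x v) + fderiv ℝ (fderiv ℝ f) x v (V x) := by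
  rw [(hasFDerivAt_dirDeriv hf hV).fderiv]; rfl

/-- The key bracket identity on C² functions. -/
lemma bracket_key {f : E → ℝ} (hf : ContDiff ℝ 2 f) {V W : E → E}
    (hV : DifferentiableAt ℝ V x) (hW : DifferentiableAt ℝ W x) :
    dirDeriv V (dirDeriv W f) x - dirDeriv W (dirDeriv V f) x
      = dirDeriv (lieBracket V W) f x := by
  have hsymm := (hf.contDiffAt (x := x)).isSymmSndFDerivAt (by simp)
  show fderiv ℝ (dirDeriv W f) x (V x) - fderiv ℝ (dirDeriv V f) x (W x) = _
  rw [fderiv_dirDeriv_apply hf hW, fderiv_dirDeriv_apply hf hV]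
  have := hsymm (V x) (W x)
  show _ = fderiv ℝ f x (fderiv ℝ W x (V x) - fderiv ℝ V x (W x))
  rw [map_sub]
  linarith [hsymm (V x) (W x)]

end aux


/-- Gauge invariance of the second-order variable
`⁽²⁾𝒬 := Q² − 2 X·Q¹ − Y·Q⁰ + X·(X·Q⁰)`, given the first- and second-order gauge
transformation rules for `Q¹`, `Q²`, `X` and `Y` (with `Y_Y − Y_X = ξ₂ + [ξ₁, X_X]`). -/
theorem second_order_gauge_invariant_variable
    {E : Type*} [NormedAddCommGroup E] [NormedSpace ℝ E] [CompleteSpace E]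
    (Q0 : E → ℝ) (hQ0 : ContDiff ℝ 2 Q0)
    (Q1X Q1Y : E → ℝ) (hQ1X : ContDiff ℝ 1 Q1X) (hQ1Y : ContDiff ℝ 1 Q1Y)
    (Q2X Q2Y : E → ℝ)
    (XX XY YX YY : E → E) (hXX : ContDiff ℝ 1 XX) (hXY : ContDiff ℝ 1 XY)
    (ξ₁ ξ₂ : E → E) (hξ₁ : ContDiff ℝ 1 ξ₁)
    (hQ1rule : ∀ x, Q1Y x - Q1X x = dirDeriv ξ₁ Q0 x)
    (hQ2rule : ∀ x, Q2Y x - Q2X x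
      = 2 * dirDeriv ξ₁ Q1X x + dirDeriv ξ₂ Q0 x + dirDeriv ξ₁ (dirDeriv ξ₁ Q0) x)
    (hXrule : ∀ x, XY x - XX x = ξ₁ x)
    (hYrule : ∀ x, YY x - YX x = ξ₂ x + lieBracket ξ₁ XX x) :
    ∀ x, Q2Y x - 2 * dirDeriv XY Q1Y x - dirDeriv YY Q0 x + dirDeriv XY (dirDeriv XY Q0) x
      = Q2X x - 2 * dirDeriv XX Q1X x - dirDeriv YX Q0 x
          + dirDeriv XX (dirDeriv XX Q0) x := by
  intro x
  have hξd : DifferentiableAt ℝ ξ₁ x := (hξ₁.differentiable one_ne_zero) x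
  have hXXd : DifferentiableAt ℝ XX x := (hXX.differentiable one_ne_zero) x
  -- functional identities
  have hQ1fun : Q1Y = fun y => Q1X y + dirDeriv ξ₁ Q0 y := by
    funext y; linarith [hQ1rule y]
  have hXYfun : XY = fun y => XX y + ξ₁ y := by
    funext y; rw [← hXrule y]; abel
  -- expand dirDeriv XY Q1Y x
  have e1 : dirDeriv XY Q1Y x
      = dirDeriv XX Q1X x + dirDeriv ξ₁ Q1X x
        + dirDeriv XX (dirDeriv ξ₁ Q0) x + dirDeriv ξ₁ (dirDeriv ξ₁ Q0) x := by
    have hdd : DifferentiableAt ℝ (dirDeriv ξ₁ Q0) x := differentiableAt_dirDeriv hQ0 hξd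
    have hQ1Xd : DifferentiableAt ℝ Q1X x := (hQ1X.differentiable one_ne_zero) x
    have : fderiv ℝ Q1Y x = fderiv ℝ Q1X x + fderiv ℝ (dirDeriv ξ₁ Q0) x := by
      rw [hQ1fun]; exact fderiv_add hQ1Xd hdd
    show fderiv ℝ Q1Y x (XY x) = _
    rw [this, hXYfun]
    simp [dirDeriv]
    ring
  -- expand dirDeriv XY (dirDeriv XY Q0) x
  have hXYQ0 : dirDeriv XY Q0 = fun y => dirDeriv XX Q0 y + dirDeriv ξ₁ Q0 y := by
    funext y
    show fderiv ℝ Q0 y (XY y) = fderiv ℝ Q0 y (XX y) + fderiv ℝ Q0 y (ξ₁ y)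
    rw [hXYfun]; exact map_add _ _ _
  have e2 : dirDeriv XY (dirDeriv XY Q0) x
      = dirDeriv XX (dirDeriv XX Q0) x + dirDeriv ξ₁ (dirDeriv XX Q0) x
        + dirDeriv XX (dirDeriv ξ₁ Q0) x + dirDeriv ξ₁ (dirDeriv ξ₁ Q0) x := by
    have h1 : DifferentiableAt ℝ (dirDeriv XX Q0) x := differentiableAt_dirDeriv hQ0 hXXd
    have h2 : DifferentiableAt ℝ (dirDeriv ξ₁ Q0) x := differentiableAt_dirDeriv hQ0 hξd
    have : fderiv ℝ (dirDeriv XY Q0) x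
        = fderiv ℝ (dirDeriv XX Q0) x + fderiv ℝ (dirDeriv ξ₁ Q0) x := by
      rw [hXYQ0]; exact fderiv_add h1 h2
    show fderiv ℝ (dirDeriv XY Q0) x (XY x) = _
    rw [this, hXYfun]
    simp [dirDeriv]
    ring
  -- expand dirDeriv YY Q0 x
  have e3 : dirDeriv YY Q0 x
      = dirDeriv YX Q0 x + dirDeriv ξ₂ Q0 x + dirDeriv (lieBracket ξ₁ XX) Q0 x := by
    show fderiv ℝ Q0 x (YY x) = fderiv ℝ Q0 x (YX x) + fderiv ℝ Q0 x (ξ₂ x) + _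
    have hyy : YY x = YX x + (ξ₂ x + lieBracket ξ₁ XX x) := by
      rw [← hYrule x]; abel
    rw [hyy]; simp only [map_add]; show _ = _ + _ + fderiv ℝ Q0 x (lieBracket ξ₁ XX x); ring
  have e4 := bracket_key hQ0 hξd hXXd
  linarith [hQ2rule x]
end

section
/- Let E be a real Banach space and let Φ : ℝ → E → E be a one-parameter family of maps with Φ 0 = id and (λ,p) ↦ Φ λ p infinitely differentiable. Define the first-order generator ξ₁ : E → E by ξ₁ p := d/dλ|_{λ=0} Φ λ p, and define the operator L₂ on twice continuously differentiable functions h : E → ℝ by (L₂ h)(p) := d²/dλ²|_{λ=0} h(Φ λ p) − (ξ₁·(ξ₁·h))(p). Then L₂ is ℝ-linear and satisfies the Leibniz rule: for all infinitely differentiable f, g : E → ℝ and all p ∈ E, L₂(f·g)(p) = f(p)·(L₂ g)(p) + g(p)·(L₂ f)(p). (This is the statement that the second-order Taylor coefficient of the pull-back, after subtracting ξ₁², is a derivation; equivalently, the coefficient a in the decomposition of the second-order term must equal 1.) -/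
/-- First-order generator `ξ₁ p = d/dλ|₀ Φ λ p` of a one-parameter family of
diffeomorphisms `Φ`. -/
noncomputable def gen1 {E : Type*} [NormedAddCommGroup E] [NormedSpace ℝ E]
    (Φ : ℝ → E → E) : E → E :=
  fun p => deriv (fun lam : ℝ => Φ lam p) 0

/-- The operator `L₂` on twice continuously differentiable scalar functions:
`(L₂ h)(p) = d²/dλ²|₀ h (Φ λ p) − (ξ₁·(ξ₁·h))(p)`, the second-order Taylor coefficient of the
pull-back of `Φ` after subtracting `ξ₁²`. -/
noncomputable def L2 {E : Type*} [NormedAddCommGroup E] [NormedSpace ℝ E]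
    (Φ : ℝ → E → E) (h : E → ℝ) : E → ℝ :=
  fun p => iteratedDeriv 2 (fun lam : ℝ => h (Φ lam p)) 0
    - dirDeriv (gen1 Φ) (dirDeriv (gen1 Φ) h) p

section helpers

variable {E : Type*} [NormedAddCommGroup E] [NormedSpace ℝ E]

lemma contDiff_dirDeriv {V : E → E} {f : E → ℝ} (hV : ContDiff ℝ (⊤ : ℕ∞) V)
    (hf : ContDiff ℝ (⊤ : ℕ∞) f) : ContDiff ℝ (⊤ : ℕ∞) (dirDeriv V f) :=
  (hf.fderiv_right (by simp)).clm_apply hV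

lemma contDiff_curve {Φ : ℝ → E → E} (hΦ : ContDiff ℝ (⊤ : ℕ∞) (fun q : ℝ × E => Φ q.1 q.2))
    (p : E) : ContDiff ℝ (⊤ : ℕ∞) (fun lam : ℝ => Φ lam p) :=
  hΦ.comp (contDiff_id.prodMk contDiff_const)

lemma contDiff_gen1 {Φ : ℝ → E → E} (hΦ : ContDiff ℝ (⊤ : ℕ∞) (fun q : ℝ × E => Φ q.1 q.2)) :
    ContDiff ℝ (⊤ : ℕ∞) (gen1 Φ) := by
  have key : ∀ p : E, gen1 Φ p
      = (fderiv ℝ (fun q : ℝ × E => Φ q.1 q.2) ((0:ℝ), p)) ((1:ℝ), (0:E)) := by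
    intro p
    have hc : HasDerivAt (fun lam : ℝ => ((lam, p) : ℝ × E)) ((1:ℝ), (0:E)) 0 :=
      (hasDerivAt_id (0:ℝ)).prodMk (hasDerivAt_const (0:ℝ) p)
    have hF : HasFDerivAt (fun q : ℝ × E => Φ q.1 q.2)
        (fderiv ℝ (fun q : ℝ × E => Φ q.1 q.2) ((0:ℝ), p)) ((0:ℝ), p) :=
      (hΦ.differentiable (by simp) ((0:ℝ), p)).hasFDerivAt
    have := hF.comp_hasDerivAt 0 hc
    simpa [gen1, Function.comp_def] using this.deriv
  have : ContDiff ℝ (⊤ : ℕ∞)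
      (fun p : E => (fderiv ℝ (fun q : ℝ × E => Φ q.1 q.2) ((0:ℝ), p)) ((1:ℝ), (0:E))) :=
    ((hΦ.fderiv_right (by simp)).comp (contDiff_const.prodMk contDiff_id)).clm_apply contDiff_const
  have heq : gen1 Φ = fun p : E => (fderiv ℝ (fun q : ℝ × E => Φ q.1 q.2) ((0:ℝ), p)) ((1:ℝ), (0:E)) := funext key
  rw [heq]; exact this
end helpers

section oneVar

lemma contDiff_deriv' {u : ℝ → ℝ} (hu : ContDiff ℝ (⊤ : ℕ∞) u) :
    ContDiff ℝ (⊤ : ℕ∞) (deriv u) := (contDiff_infty_iff_deriv.mp hu).2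

lemma itd2 (u : ℝ → ℝ) : iteratedDeriv 2 u 0 = deriv (deriv u) 0 := by
  rw [show (2:ℕ) = 1 + 1 from rfl, iteratedDeriv_succ, iteratedDeriv_one]

lemma deriv_cmul_add {u v : ℝ → ℝ} (c : ℝ) (hu : ContDiff ℝ (⊤ : ℕ∞) u)
    (hv : ContDiff ℝ (⊤ : ℕ∞) v) :
    deriv (fun t => c * u t + v t) = fun t => c * deriv u t + deriv v t := by
  funext t
  rw [deriv_fun_add (((hu.differentiable (by simp)) t).const_mul c) ((hv.differentiable (by simp)) t),
    deriv_const_mul c ((hu.differentiable (by simp)) t)]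

lemma itd2_cmul_add {u v : ℝ → ℝ} (c : ℝ) (hu : ContDiff ℝ (⊤ : ℕ∞) u)
    (hv : ContDiff ℝ (⊤ : ℕ∞) v) :
    iteratedDeriv 2 (fun t => c * u t + v t) 0
      = c * iteratedDeriv 2 u 0 + iteratedDeriv 2 v 0 := by
  rw [itd2, itd2, itd2, deriv_cmul_add c hu hv,
    deriv_fun_add (((contDiff_deriv' hu).differentiable (by simp) 0).const_mul c)
      ((contDiff_deriv' hv).differentiable (by simp) 0),
    deriv_const_mul c ((contDiff_deriv' hu).differentiable (by simp) 0)]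

lemma deriv_mul' {u v : ℝ → ℝ} (hu : ContDiff ℝ (⊤ : ℕ∞) u) (hv : ContDiff ℝ (⊤ : ℕ∞) v) :
    deriv (fun t => u t * v t) = fun t => deriv u t * v t + u t * deriv v t := by
  funext t
  rw [deriv_fun_mul ((hu.differentiable (by simp)) t) ((hv.differentiable (by simp)) t)]

lemma itd2_mul {u v : ℝ → ℝ} (hu : ContDiff ℝ (⊤ : ℕ∞) u) (hv : ContDiff ℝ (⊤ : ℕ∞) v) :
    iteratedDeriv 2 (fun t => u t * v t) 0
      = iteratedDeriv 2 u 0 * v 0 + 2 * deriv u 0 * deriv v 0 + u 0 * iteratedDeriv 2 v 0 := by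
  rw [itd2, itd2, itd2, deriv_mul' hu hv,
    deriv_fun_add (((contDiff_deriv' hu).differentiable (by simp) 0).fun_mul
        ((hv.differentiable (by simp)) 0))
      (((hu.differentiable (by simp)) 0).fun_mul ((contDiff_deriv' hv).differentiable (by simp) 0)),
    deriv_fun_mul ((contDiff_deriv' hu).differentiable (by simp) 0) ((hv.differentiable (by simp)) 0),
    deriv_fun_mul ((hu.differentiable (by simp)) 0) ((contDiff_deriv' hv).differentiable (by simp) 0)]
  ring

end oneVar

section dirAlg

variable {E : Type*} [NormedAddCommGroup E] [NormedSpace ℝ E]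

lemma dirDeriv_cmul_add_at {V : E → E} {f g : E → ℝ} (c : ℝ) {p : E}
    (hf : DifferentiableAt ℝ f p) (hg : DifferentiableAt ℝ g p) :
    dirDeriv V (fun x => c * f x + g x) p = c * dirDeriv V f p + dirDeriv V g p := by
  simp only [dirDeriv]
  rw [fderiv_fun_add (hf.const_mul c) hg, fderiv_const_mul hf c]
  simp

lemma dirDeriv_mul_at {V : E → E} {f g : E → ℝ} {p : E}
    (hf : DifferentiableAt ℝ f p) (hg : DifferentiableAt ℝ g p) :
    dirDeriv V (fun x => f x * g x) p = f p * dirDeriv V g p + g p * dirDeriv V f p := by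
  simp only [dirDeriv]
  rw [fderiv_fun_mul hf hg]
  simp

end dirAlg

section main

variable {E : Type*} [NormedAddCommGroup E] [NormedSpace ℝ E]

lemma dirDeriv_add_at {V : E → E} {f g : E → ℝ} {p : E}
    (hf : DifferentiableAt ℝ f p) (hg : DifferentiableAt ℝ g p) :
    dirDeriv V (fun x => f x + g x) p = dirDeriv V f p + dirDeriv V g p := by
  simp only [dirDeriv]
  rw [fderiv_fun_add hf hg]
  simp

lemma deriv_comp_curve {Φ : ℝ → E → E} (hΦ0 : Φ 0 = id)
    (hΦ : ContDiff ℝ (⊤ : ℕ∞) (fun q : ℝ × E => Φ q.1 q.2))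
    {h : E → ℝ} (hh : ContDiff ℝ (⊤ : ℕ∞) h) (p : E) :
    deriv (fun lam : ℝ => h (Φ lam p)) 0 = dirDeriv (gen1 Φ) h p := by
  have hc : HasDerivAt (fun lam : ℝ => Φ lam p) (gen1 Φ p) 0 :=
    ((contDiff_curve hΦ p).differentiable (by simp) 0).hasDerivAt
  have hfd := ((hh.differentiable (by simp)) (Φ 0 p)).hasFDerivAt
  have hcomp := hfd.comp_hasDerivAt 0 hc
  rw [show (fun lam : ℝ => h (Φ lam p)) = h ∘ (fun lam : ℝ => Φ lam p) from rfl, hcomp.deriv]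
  simp [dirDeriv, hΦ0]


theorem L2_linear_and_leibniz_aux
    {E : Type*} [NormedAddCommGroup E] [NormedSpace ℝ E] [CompleteSpace E]
    (Φ : ℝ → E → E) (hΦ0 : Φ 0 = id)
    (hΦ : ContDiff ℝ (⊤ : ℕ∞) (fun q : ℝ × E => Φ q.1 q.2)) :
    (∀ (c : ℝ) (f g : E → ℝ), ContDiff ℝ (⊤ : ℕ∞) f → ContDiff ℝ (⊤ : ℕ∞) g →
      ∀ p, L2 Φ (fun x => c * f x + g x) p = c * L2 Φ f p + L2 Φ g p) ∧
    (∀ (f g : E → ℝ), ContDiff ℝ (⊤ : ℕ∞) f → ContDiff ℝ (⊤ : ℕ∞) g →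
      ∀ p, L2 Φ (fun x => f x * g x) p = f p * L2 Φ g p + g p * L2 Φ f p) := by
  have hξ := contDiff_gen1 hΦ
  constructor
  · intro c f g hf hg p
    have hu : ContDiff ℝ (⊤ : ℕ∞) (fun lam : ℝ => f (Φ lam p)) := hf.comp (contDiff_curve hΦ p)
    have hv : ContDiff ℝ (⊤ : ℕ∞) (fun lam : ℝ => g (Φ lam p)) := hg.comp (contDiff_curve hΦ p)
    have hdf := contDiff_dirDeriv hξ hf
    have hdg := contDiff_dirDeriv hξ hg
    have inner : dirDeriv (gen1 Φ) (fun x => c * f x + g x)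
        = fun x => c * dirDeriv (gen1 Φ) f x + dirDeriv (gen1 Φ) g x :=
      funext fun x => dirDeriv_cmul_add_at c ((hf.differentiable (by simp)) x)
        ((hg.differentiable (by simp)) x)
    simp only [L2]
    rw [itd2_cmul_add c hu hv, inner,
      dirDeriv_cmul_add_at c ((hdf.differentiable (by simp)) p)
        ((hdg.differentiable (by simp)) p)]
    ring
  · intro f g hf hg p
    have hu : ContDiff ℝ (⊤ : ℕ∞) (fun lam : ℝ => f (Φ lam p)) := hf.comp (contDiff_curve hΦ p)
    have hv : ContDiff ℝ (⊤ : ℕ∞) (fun lam : ℝ => g (Φ lam p)) := hg.comp (contDiff_curve hΦ p)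
    have hdf := contDiff_dirDeriv hξ hf
    have hdg := contDiff_dirDeriv hξ hg
    have inner : dirDeriv (gen1 Φ) (fun x => f x * g x)
        = fun x => f x * dirDeriv (gen1 Φ) g x + g x * dirDeriv (gen1 Φ) f x :=
      funext fun x => dirDeriv_mul_at ((hf.differentiable (by simp)) x)
        ((hg.differentiable (by simp)) x)
    simp only [L2]
    rw [itd2_mul hu hv, inner,
      dirDeriv_add_at (((hf.differentiable (by simp)) p).fun_mul ((hdg.differentiable (by simp)) p))
        (((hg.differentiable (by simp)) p).fun_mul ((hdf.differentiable (by simp)) p)),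
      dirDeriv_mul_at ((hf.differentiable (by simp)) p) ((hdg.differentiable (by simp)) p),
      dirDeriv_mul_at ((hg.differentiable (by simp)) p) ((hdf.differentiable (by simp)) p),
      deriv_comp_curve hΦ0 hΦ hf p, deriv_comp_curve hΦ0 hΦ hg p]
    simp only [hΦ0, id_eq]
    ring

end main

/-- For a general one-parameter family of diffeomorphisms `Φ` with `Φ 0 = id`,
the operator `L₂` is ℝ-linear and satisfies the Leibniz rule on infinitely differentiable
functions; hence it is a derivation (the coefficient `a` in the decomposition of the
second-order Taylor term must equal 1). -/
theorem L2_linear_and_leibniz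
    {E : Type*} [NormedAddCommGroup E] [NormedSpace ℝ E] [CompleteSpace E]
    (Φ : ℝ → E → E) (hΦ0 : Φ 0 = id)
    (hΦ : ContDiff ℝ (⊤ : ℕ∞) (fun q : ℝ × E => Φ q.1 q.2)) :
    (∀ (c : ℝ) (f g : E → ℝ), ContDiff ℝ (⊤ : ℕ∞) f → ContDiff ℝ (⊤ : ℕ∞) g →
      ∀ p, L2 Φ (fun x => c * f x + g x) p = c * L2 Φ f p + L2 Φ g p) ∧
    (∀ (f g : E → ℝ), ContDiff ℝ (⊤ : ℕ∞) f → ContDiff ℝ (⊤ : ℕ∞) g →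
      ∀ p, L2 Φ (fun x => f x * g x) p = f p * L2 Φ g p + g p * L2 Φ f p) := by
  exact L2_linear_and_leibniz_aux Φ hΦ0 hΦ
end

section
/- Let E be a real Banach space and let Φ : ℝ → E → E be a one-parameter family of maps with Φ 0 = id and (λ,p) ↦ Φ λ p infinitely differentiable. Then there exist vector fields ξ₁, ξ₂ : E → E (namely ξ₁ p = d/dλ|₀ Φ λ p and ξ₂ p = d²/dλ²|₀ Φ λ p − (fderiv ℝ ξ₁ p)(ξ₁ p)) such that for every twice continuously differentiable f : E → ℝ and every p ∈ E: d/dλ|_{λ=0} f(Φ λ p) = (ξ₁·f)(p) and d²/dλ²|_{λ=0} f(Φ λ p) = (ξ₂·f)(p) + (ξ₁·(ξ₁·f))(p); consequently, as λ → 0, f(Φ λ p) = f(p) + λ (ξ₁·f)(p) + (λ²/2) ((ξ₂·f)(p) + (ξ₁·(ξ₁·f))(p)) + o(λ²). (Sonego–Bruni representation of the Taylor expansion of a pull-back in terms of first- and second-order generators.) -/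
open Asymptotics
open scoped Topology

theorem aux_taylor2 {g : ℝ → ℝ} (hg : ContDiff ℝ 2 g) :
    (fun x : ℝ => g x - (g 0 + x * deriv g 0 + x ^ 2 / 2 * deriv (deriv g) 0))
      =o[𝓝 0] fun x : ℝ => x ^ 2 := by
  set a := deriv g 0 with ha
  set b := deriv (deriv g) 0 with hb
  have hdg : Differentiable ℝ g := hg.differentiable (by norm_num)
  have hg1 : ContDiff ℝ 1 (deriv g) := (contDiff_succ_iff_deriv.mp (by exact_mod_cast hg)).2.2
  have hdg' : Differentiable ℝ (deriv g) := hg1.differentiable one_ne_zero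
  set h : ℝ → ℝ := fun x => g x - (g 0 + x * a + x ^ 2 / 2 * b) with hh_def
  have h0 : h 0 = 0 := by simp [hh_def]
  have hh : ∀ x, HasDerivAt h (deriv g x - a - x * b) x := by
    intro x
    have h1 : HasDerivAt (fun x : ℝ => g 0 + x * a + x ^ 2 / 2 * b) (a + x * b) x := by
      have h2 : HasDerivAt (fun x : ℝ => x ^ 2 / 2 * b) (x * b) x := by
        have := ((hasDerivAt_pow 2 x).div_const 2).mul_const b
        refine this.congr_deriv ?_
        ring
      have h3 : HasDerivAt (fun x : ℝ => g 0 + x * a) a x := by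
        simpa using ((hasDerivAt_id' x).mul_const a).const_add (g 0)
      exact h3.add h2
    have := (hdg x).hasDerivAt.sub h1
    refine this.congr_deriv ?_
    ring
  have key : (fun x : ℝ => deriv g x - a - x * b) =o[𝓝 0] fun x : ℝ => x := by
    have := (hdg' 0).hasDerivAt.isLittleO
    simpa [ha, hb] using this
  rw [isLittleO_iff]
  intro ε hε
  rw [isLittleO_iff] at key
  obtain ⟨δ, hδ, hδ'⟩ := Metric.eventually_nhds_iff.mp (key hε)
  rw [Metric.eventually_nhds_iff]
  refine ⟨δ, hδ, fun x hx => ?_⟩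
  simp only [Real.dist_eq, sub_zero] at hx hδ'
  have hbound : ∀ t : ℝ, |t| ≤ |x| → ‖deriv g t - a - t * b‖ ≤ ε * |x| := by
    intro t ht
    have : ‖deriv g t - a - t * b‖ ≤ ε * ‖t‖ := hδ' (ht.trans_lt hx)
    refine this.trans ?_
    exact mul_le_mul_of_nonneg_left (by simpa using ht) hε.le
  have hxsq : ‖h x‖ ≤ ε * |x| * |x| := by
    rcases le_or_gt 0 x with hx0 | hx0
    · have := norm_image_sub_le_of_norm_deriv_le_segment'
        (f := h) (f' := fun t => deriv g t - a - t * b) (C := ε * |x|) (a := 0) (b := x)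
        (fun t _ => (hh t).hasDerivWithinAt)
        (fun t ht => hbound t (by rw [abs_of_nonneg ht.1, abs_of_nonneg hx0]; exact ht.2.le))
        x (Set.right_mem_Icc.mpr hx0)
      rw [h0, sub_zero, sub_zero] at this
      calc ‖h x‖ ≤ ε * |x| * x := this
        _ ≤ ε * |x| * |x| := by
            exact mul_le_mul_of_nonneg_left (le_abs_self x) (by positivity)
    · have := norm_image_sub_le_of_norm_deriv_le_segment'
        (f := h) (f' := fun t => deriv g t - a - t * b) (C := ε * |x|) (a := x) (b := 0)
        (fun t _ => (hh t).hasDerivWithinAt)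
        (fun t ht => hbound t (by
          rw [abs_of_neg hx0]
          rcases le_or_gt 0 t with h1 | h1
          · rw [abs_of_nonneg h1]; linarith [ht.2]
          · rw [abs_of_neg h1]; linarith [ht.1]))
        0 (Set.right_mem_Icc.mpr hx0.le)
      rw [h0, zero_sub, norm_neg, zero_sub, abs_of_neg hx0] at this
      rw [abs_of_neg hx0]
      exact this
  calc ‖h x‖ ≤ ε * |x| * |x| := hxsq
    _ = ε * ‖x ^ 2‖ := by rw [mul_assoc, ← abs_mul]; norm_num [sq, abs_mul]

/-- Sonego–Bruni representation: for a general one-parameter family of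
diffeomorphisms `Φ` with `Φ 0 = id`, there exist vector fields `ξ₁` (the first λ-derivative
of `Φ`) and `ξ₂` (the second λ-derivative minus `(fderiv ξ₁)(ξ₁)`) such that for every C²
scalar function `f` and every point `p`,
`d/dλ|₀ f (Φ λ p) = (ξ₁·f)(p)`,
`d²/dλ²|₀ f (Φ λ p) = (ξ₂·f)(p) + (ξ₁·(ξ₁·f))(p)`, and
`f (Φ λ p) = f p + λ (ξ₁·f)(p) + (λ²/2)((ξ₂·f)(p) + (ξ₁·(ξ₁·f))(p)) + o(λ²)` as `λ → 0`. -/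
theorem sonego_bruni_taylor_representation
    {E : Type*} [NormedAddCommGroup E] [NormedSpace ℝ E] [CompleteSpace E]
    (Φ : ℝ → E → E) (hΦ0 : Φ 0 = id)
    (hΦ : ContDiff ℝ (⊤ : ℕ∞) (fun q : ℝ × E => Φ q.1 q.2)) :
    ∃ ξ₁ ξ₂ : E → E,
      (∀ p, ξ₁ p = deriv (fun lam : ℝ => Φ lam p) 0) ∧
      (∀ p, ξ₂ p = iteratedDeriv 2 (fun lam : ℝ => Φ lam p) 0 - (fderiv ℝ ξ₁ p) (ξ₁ p)) ∧
      ∀ (f : E → ℝ), ContDiff ℝ 2 f → ∀ p : E,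
        deriv (fun lam : ℝ => f (Φ lam p)) 0 = dirDeriv ξ₁ f p ∧
        iteratedDeriv 2 (fun lam : ℝ => f (Φ lam p)) 0
          = dirDeriv ξ₂ f p + dirDeriv ξ₁ (dirDeriv ξ₁ f) p ∧
        (fun lam : ℝ => f (Φ lam p)
            - (f p + lam * dirDeriv ξ₁ f p
              + lam ^ 2 / 2 * (dirDeriv ξ₂ f p + dirDeriv ξ₁ (dirDeriv ξ₁ f) p)))
          =o[𝓝 0] fun lam : ℝ => lam ^ 2 := by
  set F : ℝ × E → E := fun q => Φ q.1 q.2 with hF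
  have hFd : Differentiable ℝ F := hΦ.differentiable (by simp)
  have hFd' : ContDiff ℝ (⊤ : ℕ∞) (fun q => fderiv ℝ F q) := hΦ.fderiv_right (by simp)
  set G : ℝ × E → E := fun q => fderiv ℝ F q (1, 0) with hG
  have hGc : ContDiff ℝ (⊤ : ℕ∞) G := hFd'.clm_apply contDiff_const
  have hGd : Differentiable ℝ G := hGc.differentiable (by simp)
  -- curve derivatives
  have hcurve : ∀ (p : E) (lam : ℝ), HasDerivAt (fun t : ℝ => (t, p)) ((1 : ℝ), (0 : E)) lam :=
    fun p lam => HasDerivAt.prodMk (hasDerivAt_id lam) (hasDerivAt_const lam p)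
  have hc1 : ∀ (p : E) (lam : ℝ),
      HasDerivAt (fun t : ℝ => F (t, p)) (G (lam, p)) lam :=
    fun p lam => by exact (hFd (lam, p)).hasFDerivAt.comp_hasDerivAt lam (hcurve p lam)
  have hc2 : ∀ (p : E) (lam : ℝ),
      HasDerivAt (fun t : ℝ => G (t, p)) (fderiv ℝ G (lam, p) (1, 0)) lam :=
    fun p lam => by exact (hGd (lam, p)).hasFDerivAt.comp_hasDerivAt lam (hcurve p lam)
  set ξ₁ : E → E := fun p => G (0, p) with hξ₁
  set W : E → E := fun p => fderiv ℝ G (0, p) (1, 0) with hW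
  set ξ₂ : E → E := fun p => W p - fderiv ℝ ξ₁ p (ξ₁ p) with hξ₂
  have hFp : ∀ p, F (0, p) = p := fun p => by simp [hF, hΦ0]
  -- ξ₁ is smooth hence differentiable
  have hξ₁c : ContDiff ℝ (⊤ : ℕ∞) ξ₁ :=
    hGc.comp (ContDiff.prodMk contDiff_const contDiff_id)
  have hξ₁d : Differentiable ℝ ξ₁ := hξ₁c.differentiable (by simp)
  -- deriv of the curve
  have hderiv_curve : ∀ p, deriv (fun lam : ℝ => Φ lam p) 0 = ξ₁ p :=
    fun p => (hc1 p 0).deriv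
  have hiter_curve : ∀ p, iteratedDeriv 2 (fun lam : ℝ => Φ lam p) 0 = W p := by
    intro p
    rw [iteratedDeriv_succ, iteratedDeriv_one]
    have : deriv (fun lam : ℝ => Φ lam p) = fun lam => G (lam, p) := by
      funext lam; exact (hc1 p lam).deriv
    rw [this]
    exact (hc2 p 0).deriv
  refine ⟨ξ₁, ξ₂, fun p => (hderiv_curve p).symm, fun p => by rw [hiter_curve p], ?_⟩
  intro f hf p
  have hfd : Differentiable ℝ f := hf.differentiable (by norm_num)
  have hf1 : ContDiff ℝ 1 (fderiv ℝ f) := hf.fderiv_right (le_refl 2)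
  have hfd' : Differentiable ℝ (fderiv ℝ f) := hf1.differentiable one_ne_zero
  -- first derivative
  have hg1 : HasDerivAt (fun lam : ℝ => f (Φ lam p)) (fderiv ℝ f p (ξ₁ p)) 0 := by
    have h := (hfd (F (0, p))).hasFDerivAt.comp_hasDerivAt 0 (hc1 p 0)
    rw [hFp p] at h
    exact h
  have e1 : deriv (fun lam : ℝ => f (Φ lam p)) 0 = dirDeriv ξ₁ f p := hg1.deriv
  -- g is C²
  have hgC2 : ContDiff ℝ 2 (fun lam : ℝ => f (Φ lam p)) := by
    have hcurveC : ContDiff ℝ (⊤ : ℕ∞) (fun lam : ℝ => Φ lam p) :=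
      hΦ.comp (ContDiff.prodMk contDiff_id contDiff_const)
    exact hf.comp (contDiff_infty.mp hcurveC 2)
  -- second derivative of g
  have hderiv_g : deriv (fun lam : ℝ => f (Φ lam p)) = fun lam => (fderiv ℝ f (F (lam, p))) (G (lam, p)) := by
    funext lam
    exact ((hfd (F (lam, p))).hasFDerivAt.comp_hasDerivAt lam (hc1 p lam)).deriv
  have hA : HasDerivAt (fun lam : ℝ => fderiv ℝ f (F (lam, p)))
      (fderiv ℝ (fderiv ℝ f) p (ξ₁ p)) 0 := by
    have h := (hfd' (F (0, p))).hasFDerivAt.comp_hasDerivAt 0 (hc1 p 0)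
    rw [hFp p] at h
    exact h
  have hg2 : HasDerivAt (deriv (fun lam : ℝ => f (Φ lam p)))
      ((fderiv ℝ (fderiv ℝ f) p (ξ₁ p)) (ξ₁ p) + (fderiv ℝ f p) (W p)) 0 := by
    rw [hderiv_g]
    have h := hA.clm_apply (hc2 p 0)
    rw [hFp p] at h
    exact h
  have e2iter : iteratedDeriv 2 (fun lam : ℝ => f (Φ lam p)) 0
      = (fderiv ℝ (fderiv ℝ f) p (ξ₁ p)) (ξ₁ p) + (fderiv ℝ f p) (W p) := by
    rw [iteratedDeriv_succ, iteratedDeriv_one]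
    exact hg2.deriv
  -- RHS of second identity
  have eRHS : dirDeriv ξ₂ f p + dirDeriv ξ₁ (dirDeriv ξ₁ f) p
      = (fderiv ℝ (fderiv ℝ f) p (ξ₁ p)) (ξ₁ p) + (fderiv ℝ f p) (W p) := by
    have h1 : dirDeriv ξ₂ f p
        = (fderiv ℝ f p) (W p) - (fderiv ℝ f p) (fderiv ℝ ξ₁ p (ξ₁ p)) := by
      exact map_sub (fderiv ℝ f p) (W p) (fderiv ℝ ξ₁ p (ξ₁ p))
    have h2 : dirDeriv ξ₁ (dirDeriv ξ₁ f) p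
        = (fderiv ℝ f p) (fderiv ℝ ξ₁ p (ξ₁ p)) + (fderiv ℝ (fderiv ℝ f) p (ξ₁ p)) (ξ₁ p) := by
      show (fderiv ℝ (fun x => (fderiv ℝ f x) (ξ₁ x)) p) (ξ₁ p) = _
      rw [fderiv_clm_apply (hfd' p) (hξ₁d p)]
      simp
    rw [h1, h2]
    ring
  have e2 : iteratedDeriv 2 (fun lam : ℝ => f (Φ lam p)) 0
      = dirDeriv ξ₂ f p + dirDeriv ξ₁ (dirDeriv ξ₁ f) p := by
    rw [e2iter, eRHS]
  refine ⟨e1, e2, ?_⟩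
  -- Taylor expansion
  have htay := aux_taylor2 hgC2
  have hd2 : deriv (deriv (fun lam : ℝ => f (Φ lam p))) 0
      = dirDeriv ξ₂ f p + dirDeriv ξ₁ (dirDeriv ξ₁ f) p := by
    have h := e2
    rwa [iteratedDeriv_succ, iteratedDeriv_one] at h
  rw [e1, hd2] at htay
  have h00 : f (Φ 0 p) = f p := by rw [hΦ0]; rfl
  rw [h00] at htay
  exact htay
end

section
/- Work on a spatially flat (K = 0) Friedmann background. Let G be a real constant, a : ℝ → ℝ a smooth positive function, φ : ℝ → ℝ smooth with φ′(η) ≠ 0 for all η, V : ℝ → ℝ smooth, and set ℋ := a′/a. Let Φ, φ₁ : ℝ × ℝ³ → ℝ be smooth functions of (η, x) (the gauge-invariant scalar metric perturbation and the gauge-invariant first-order scalar field perturbation), and let Δ denote the spatial Laplacian Δf = Σᵢ ∂²f/∂xᵢ². Assume that for all (η, x) the three first-order Einstein equations hold: (i) ΔΦ − 3ℋ ∂_ηΦ − (ℋ′ + 2ℋ²) Φ = 4πG ( ∂_ηφ₁ · φ′ + a² V′(φ) φ₁ ); (ii) ∂_ηΦ + ℋ Φ = 4πG φ₁ φ′;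 (iii) ∂_η²Φ + 3ℋ ∂_ηΦ + (ℋ′ + 2ℋ²) Φ = 4πG ( ∂_ηφ₁ · φ′ − a² V′(φ) φ₁ ). Then Φ satisfies the master equation of first-order scalar cosmological perturbations: for all (η, x), ∂_η²Φ + 2 ( ℋ − φ″/φ′ ) ∂_ηΦ − ΔΦ + 2 ( ℋ′ − ℋ φ″/φ′ ) Φ = 0. -/
/-- Conformal-time derivative `∂_η f` of a function of `(η, x) ∈ ℝ × ℝ³`. -/
noncomputable def dEta (f : ℝ × (Fin 3 → ℝ) → ℝ) : ℝ × (Fin 3 → ℝ) → ℝ :=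
  fun q => (fderiv ℝ f q) (1, 0)

/-- Spatial partial derivative `∂f/∂xᵢ` of a function of `(η, x) ∈ ℝ × ℝ³`. -/
noncomputable def dX (i : Fin 3) (f : ℝ × (Fin 3 → ℝ) → ℝ) : ℝ × (Fin 3 → ℝ) → ℝ :=
  fun q => (fderiv ℝ f q) (0, Pi.single i 1)

/-- Spatial (flat) Laplacian `Δf = Σᵢ ∂²f/∂xᵢ²` of a function of `(η, x) ∈ ℝ × ℝ³`. -/
noncomputable def lap (f : ℝ × (Fin 3 → ℝ) → ℝ) : ℝ × (Fin 3 → ℝ) → ℝ :=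
  fun q => ∑ i : Fin 3, dX i (dX i f) q

lemma contDiff_dEta {f : ℝ × (Fin 3 → ℝ) → ℝ} (hf : ContDiff ℝ (⊤ : ℕ∞) f) :
    ContDiff ℝ (⊤ : ℕ∞) (dEta f) :=
  (hf.fderiv_right (by simp)).clm_apply contDiff_const

/-- On a spatially flat (`K = 0`) Friedmann background with scale factor `a(η)`,
`ℋ = a′/a`, homogeneous scalar field `φ(η)` with `φ′ ≠ 0` and potential `V`, the three
first-order Einstein equations for the gauge-invariant perturbations `Φ`, `φ₁` imply the
master equation
`∂_η²Φ + 2(ℋ − φ″/φ′)∂_ηΦ − ΔΦ + 2(ℋ′ − ℋφ″/φ′)Φ = 0`. -/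
theorem first_order_master_equation
    (G : ℝ)
    (a φ : ℝ → ℝ) (ha : ContDiff ℝ (⊤ : ℕ∞) a) (hapos : ∀ η, 0 < a η)
    (hφ : ContDiff ℝ (⊤ : ℕ∞) φ) (hφ' : ∀ η : ℝ, deriv φ η ≠ 0)
    (V : ℝ → ℝ) (hV : ContDiff ℝ (⊤ : ℕ∞) V)
    (Φ φ₁ : ℝ × (Fin 3 → ℝ) → ℝ)
    (hΦ : ContDiff ℝ (⊤ : ℕ∞) Φ) (hφ₁ : ContDiff ℝ (⊤ : ℕ∞) φ₁)
    (hEin1 : ∀ q : ℝ × (Fin 3 → ℝ),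
      lap Φ q - 3 * (deriv a q.1 / a q.1) * dEta Φ q
          - (deriv (fun t => deriv a t / a t) q.1 + 2 * (deriv a q.1 / a q.1) ^ 2) * Φ q
        = 4 * Real.pi * G
            * (dEta φ₁ q * deriv φ q.1 + (a q.1) ^ 2 * deriv V (φ q.1) * φ₁ q))
    (hEin2 : ∀ q : ℝ × (Fin 3 → ℝ),
      dEta Φ q + (deriv a q.1 / a q.1) * Φ q
        = 4 * Real.pi * G * (φ₁ q * deriv φ q.1))
    (hEin3 : ∀ q : ℝ × (Fin 3 → ℝ),
      dEta (dEta Φ) q + 3 * (deriv a q.1 / a q.1) * dEta Φ q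
          + (deriv (fun t => deriv a t / a t) q.1 + 2 * (deriv a q.1 / a q.1) ^ 2) * Φ q
        = 4 * Real.pi * G
            * (dEta φ₁ q * deriv φ q.1 - (a q.1) ^ 2 * deriv V (φ q.1) * φ₁ q)) :
    ∀ q : ℝ × (Fin 3 → ℝ),
      dEta (dEta Φ) q
        + 2 * (deriv a q.1 / a q.1 - deriv (deriv φ) q.1 / deriv φ q.1) * dEta Φ q
        - lap Φ q
        + 2 * (deriv (fun t => deriv a t / a t) q.1
            - (deriv a q.1 / a q.1) * (deriv (deriv φ) q.1 / deriv φ q.1)) * Φ q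
      = 0 := by
  intro q
  have hderiva : ContDiff ℝ (⊤ : ℕ∞) (deriv a) := (contDiff_infty_iff_deriv.mp ha).2
  have hH : ContDiff ℝ (⊤ : ℕ∞) (fun t => deriv a t / a t) :=
    hderiva.div ha (fun t => (hapos t).ne')
  have hφdsm : ContDiff ℝ (⊤ : ℕ∞) (deriv φ) := (contDiff_infty_iff_deriv.mp hφ).2
  have hdEtaΦ : ContDiff ℝ (⊤ : ℕ∞) (dEta Φ) := contDiff_dEta hΦ
  have h1 : HasFDerivAt (dEta Φ) (fderiv ℝ (dEta Φ) q) q :=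
    (hdEtaΦ.differentiable (by simp) q).hasFDerivAt
  have hHc : HasFDerivAt (fun p : ℝ × (Fin 3 → ℝ) => deriv a p.1 / a p.1)
      ((deriv (fun t => deriv a t / a t) q.1) • ContinuousLinearMap.fst ℝ ℝ (Fin 3 → ℝ)) q :=
    (hH.differentiable (by simp) q.1).hasDerivAt.comp_hasFDerivAt q hasFDerivAt_fst
  have hΦq : HasFDerivAt Φ (fderiv ℝ Φ q) q := (hΦ.differentiable (by simp) q).hasFDerivAt
  have hφ₁q : HasFDerivAt φ₁ (fderiv ℝ φ₁ q) q := (hφ₁.differentiable (by simp) q).hasFDerivAt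
  have hφ'c : HasFDerivAt (fun p : ℝ × (Fin 3 → ℝ) => deriv φ p.1)
      ((deriv (deriv φ) q.1) • ContinuousLinearMap.fst ℝ ℝ (Fin 3 → ℝ)) q :=
    (hφdsm.differentiable (by simp) q.1).hasDerivAt.comp_hasFDerivAt q hasFDerivAt_fst
  have hLHS := h1.add (hHc.mul hΦq)
  have hRHS := (hφ₁q.mul hφ'c).const_mul (4 * Real.pi * G)
  have hfun : (fun p : ℝ × (Fin 3 → ℝ) => dEta Φ p + deriv a p.1 / a p.1 * Φ p)
      = fun p => 4 * Real.pi * G * (φ₁ p * deriv φ p.1) := funext hEin2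
  rw [show dEta Φ + (fun p : ℝ × (Fin 3 → ℝ) => deriv a p.1 / a p.1) * Φ = fun p => dEta Φ p + deriv a p.1 / a p.1 * Φ p from rfl, hfun] at hLHS
  have hDeq := hLHS.unique hRHS
  have e2' := congrArg (fun (L : ℝ × (Fin 3 → ℝ) →L[ℝ] ℝ) => L (1, 0)) hDeq
  simp only [ContinuousLinearMap.add_apply, ContinuousLinearMap.smul_apply,
    ContinuousLinearMap.coe_fst', ContinuousLinearMap.coe_smul',
    Pi.smul_apply, smul_eq_mul] at e2'
  have e2'' : dEta (dEta Φ) q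
        + (deriv a q.1 / a q.1 * dEta Φ q + Φ q * deriv (fun t => deriv a t / a t) q.1)
      = 4 * Real.pi * G
          * (φ₁ q * deriv (deriv φ) q.1 + deriv φ q.1 * dEta φ₁ q) := by
    simpa [dEta] using e2'
  have e1 := hEin1 q
  have e2 := hEin2 q
  have e3 := hEin3 q
  have hφne : deriv φ q.1 ≠ 0 := hφ' q.1
  have hu : deriv φ q.1 * (deriv φ q.1)⁻¹ = 1 := mul_inv_cancel₀ hφne
  linear_combination 2 * e2'' - e1 - e3
    - 2 * (deriv (deriv φ) q.1) * (deriv φ q.1)⁻¹ * e2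
    - 2 * (4 * Real.pi * G) * (φ₁ q) * (deriv (deriv φ) q.1) * hu
end

section
/- Work on a spatially flat (K = 0) Friedmann background. Let G be a real constant with G ≠ 0, a : ℝ → ℝ a smooth positive function, φ : ℝ → ℝ smooth with φ′(η) ≠ 0 for all η, V : ℝ → ℝ smooth, and set ℋ := a′/a. Let Φ, φ₁ : ℝ × ℝ³ → ℝ be smooth, and let Δ denote the spatial Laplacian. Assume for all η the background Einstein equations ℋ² = (8πG/3)( (1/2)(φ′)² + a² V(φ) ) and 2ℋ′ + ℋ² = 8πG( −(1/2)(φ′)² + a² V(φ) ), and assume for all (η, x) the first-order Einstein equations: (i) ΔΦ − 3ℋ ∂_ηΦ − (ℋ′ + 2ℋ²) Φ = 4πG ( ∂_ηφ₁ · φ′ + a² V′(φ) φ₁ ); (ii) ∂_ηΦ + ℋ Φ = 4πG φ₁ φ′; (iii) ∂_η²Φ + 3ℋ ∂_ηΦ + (ℋ′ + 2ℋ²) Φ = 4πG ( ∂_ηφ₁ · φ′ − a² V′(φ) φ₁ ). Then the first-order perturbation of the Klein–Gordon equation holds: for all (η, x), ∂_η²φ₁ + 2ℋ ∂_ηφ₁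 − Δφ₁ − 4 ∂_ηΦ · φ′ + 2 a² V′(φ) Φ + a² V″(φ) φ₁ = 0. Hence the first-order Klein–Gordon equation is not independent of the background and first-order Einstein equations. -/
section Aux

variable {f g : ℝ × (Fin 3 → ℝ) → ℝ} {q v : ℝ × (Fin 3 → ℝ)} {c : ℝ → ℝ}

private lemma le_top' : (1 : WithTop ℕ∞) ≤ ((⊤:ℕ∞) : WithTop ℕ∞) := by norm_cast

private lemma smooth_fderiv (hf : ContDiff ℝ (⊤:ℕ∞) f) :
    ContDiff ℝ (⊤:ℕ∞) (fderiv ℝ f) := hf.fderiv_right (by simp)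

private lemma smooth_dEta (hf : ContDiff ℝ (⊤:ℕ∞) f) : ContDiff ℝ (⊤:ℕ∞) (dEta f) :=
  (ContinuousLinearMap.apply ℝ ℝ ((1:ℝ), (0 : Fin 3 → ℝ))).contDiff.comp (smooth_fderiv hf)

private lemma smooth_dX (i : Fin 3) (hf : ContDiff ℝ (⊤:ℕ∞) f) : ContDiff ℝ (⊤:ℕ∞) (dX i f) :=
  (ContinuousLinearMap.apply ℝ ℝ ((0:ℝ), (Pi.single i 1 : Fin 3 → ℝ))).contDiff.comp (smooth_fderiv hf)

private lemma smooth_lap (hf : ContDiff ℝ (⊤:ℕ∞) f) : ContDiff ℝ (⊤:ℕ∞) (lap f) := by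
  have : ContDiff ℝ (⊤:ℕ∞) (fun q => ∑ i : Fin 3, dX i (dX i f) q) :=
    ContDiff.sum fun i _ => smooth_dX i (smooth_dX i hf)
  exact this

private lemma fdv_add (hf : DifferentiableAt ℝ f q) (hg : DifferentiableAt ℝ g q) :
    fderiv ℝ (fun p => f p + g p) q v = fderiv ℝ f q v + fderiv ℝ g q v := by
  rw [fderiv_fun_add hf hg]; rfl

private lemma fdv_sub (hf : DifferentiableAt ℝ f q) (hg : DifferentiableAt ℝ g q) :
    fderiv ℝ (fun p => f p - g p) q v = fderiv ℝ f q v - fderiv ℝ g q v := by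
  rw [fderiv_fun_sub hf hg]; rfl

private lemma fdv_mul (hf : DifferentiableAt ℝ f q) (hg : DifferentiableAt ℝ g q) :
    fderiv ℝ (fun p => f p * g p) q v = fderiv ℝ f q v * g q + f q * fderiv ℝ g q v := by
  rw [fderiv_fun_mul hf hg]
  simp only [ContinuousLinearMap.add_apply, ContinuousLinearMap.smul_apply, smul_eq_mul]
  ring

private lemma fdv_const_mul (hf : DifferentiableAt ℝ f q) (k : ℝ) :
    fderiv ℝ (fun p => k * f p) q v = k * fderiv ℝ f q v := by
  rw [fderiv_const_mul hf]; rfl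

private lemma fdv_comp_fst (hc : DifferentiableAt ℝ c q.1) :
    fderiv ℝ (fun p : ℝ × (Fin 3 → ℝ) => c p.1) q v = deriv c q.1 * v.1 := by
  have h : HasFDerivAt (fun p : ℝ × (Fin 3 → ℝ) => c p.1)
      ((ContinuousLinearMap.smulRight (1 : ℝ →L[ℝ] ℝ) (deriv c q.1)).comp
        (ContinuousLinearMap.fst ℝ ℝ (Fin 3 → ℝ))) q :=
    (hc.hasDerivAt.hasFDerivAt).comp q hasFDerivAt_fst
  rw [h.fderiv]
  simp [mul_comm]

private lemma fdv_sum {A : Fin 3 → (ℝ × (Fin 3 → ℝ) → ℝ)}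
    (h : ∀ i, DifferentiableAt ℝ (A i) q) :
    fderiv ℝ (fun p => ∑ i : Fin 3, A i p) q v = ∑ i : Fin 3, fderiv ℝ (A i) q v := by
  rw [fderiv_fun_sum (fun i _ => h i)]
  simp

-- dEta versions
private lemma dEta_add (hf : DifferentiableAt ℝ f q) (hg : DifferentiableAt ℝ g q) :
    dEta (fun p => f p + g p) q = dEta f q + dEta g q := fdv_add hf hg

private lemma dEta_sub (hf : DifferentiableAt ℝ f q) (hg : DifferentiableAt ℝ g q) :
    dEta (fun p => f p - g p) q = dEta f q - dEta g q := fdv_sub hf hg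

private lemma dEta_mul (hf : DifferentiableAt ℝ f q) (hg : DifferentiableAt ℝ g q) :
    dEta (fun p => f p * g p) q = dEta f q * g q + f q * dEta g q := fdv_mul hf hg

private lemma dEta_const_mul (hf : DifferentiableAt ℝ f q) (k : ℝ) :
    dEta (fun p => k * f p) q = k * dEta f q := fdv_const_mul hf k

private lemma dEta_comp_fst (hc : DifferentiableAt ℝ c q.1) :
    dEta (fun p : ℝ × (Fin 3 → ℝ) => c p.1) q = deriv c q.1 := by
  have h := fdv_comp_fst (v := ((1:ℝ), (0 : Fin 3 → ℝ))) hc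
  simpa [dEta] using h

private lemma dEta_cmul (hc : DifferentiableAt ℝ c q.1) (hf : DifferentiableAt ℝ f q) :
    dEta (fun p => c p.1 * f p) q = deriv c q.1 * f q + c q.1 * dEta f q := by
  have h := dEta_mul (f := fun p : ℝ × (Fin 3 → ℝ) => c p.1) (g := f)
    ((hc.comp q differentiableAt_fst)) hf
  rw [h, dEta_comp_fst hc]

private lemma dEta_mulc (hc : DifferentiableAt ℝ c q.1) (hf : DifferentiableAt ℝ f q) :
    dEta (fun p => f p * c p.1) q = dEta f q * c q.1 + f q * deriv c q.1 := by
  have h := dEta_mul (f := f) (g := fun p : ℝ × (Fin 3 → ℝ) => c p.1) hf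
    ((hc.comp q differentiableAt_fst))
  rw [h, dEta_comp_fst hc]

-- dX versions
private lemma dX_add {i : Fin 3} (hf : DifferentiableAt ℝ f q) (hg : DifferentiableAt ℝ g q) :
    dX i (fun p => f p + g p) q = dX i f q + dX i g q := fdv_add hf hg

private lemma dX_const_mul {i : Fin 3} (hf : DifferentiableAt ℝ f q) (k : ℝ) :
    dX i (fun p => k * f p) q = k * dX i f q := fdv_const_mul hf k

private lemma dX_comp_fst {i : Fin 3} (hc : DifferentiableAt ℝ c q.1) :
    dX i (fun p : ℝ × (Fin 3 → ℝ) => c p.1) q = 0 := by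
  have h := fdv_comp_fst (v := ((0:ℝ), Pi.single i (1:ℝ))) hc
  simpa [dX] using h

private lemma dX_cmul {i : Fin 3} (hc : DifferentiableAt ℝ c q.1) (hf : DifferentiableAt ℝ f q) :
    dX i (fun p => c p.1 * f p) q = c q.1 * dX i f q := by
  have h := fdv_mul (v := ((0:ℝ), Pi.single i (1:ℝ)))
    (f := fun p : ℝ × (Fin 3 → ℝ) => c p.1) (g := f) ((hc.comp q differentiableAt_fst)) hf
  have h0 := dX_comp_fst (i := i) (q := q) hc
  simp only [dX] at h0 ⊢
  rw [h, h0]; ring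

private lemma dX_mulc {i : Fin 3} (hc : DifferentiableAt ℝ c q.1) (hf : DifferentiableAt ℝ f q) :
    dX i (fun p => f p * c p.1) q = dX i f q * c q.1 := by
  have h := fdv_mul (v := ((0:ℝ), Pi.single i (1:ℝ)))
    (f := f) (g := fun p : ℝ × (Fin 3 → ℝ) => c p.1) hf ((hc.comp q differentiableAt_fst))
  have h0 := dX_comp_fst (i := i) (q := q) hc
  simp only [dX] at h h0 ⊢
  rw [h, h0]; ring

/-- Mixed second partial derivatives commute. -/
private lemma fderiv_swap (hf : ContDiff ℝ (⊤:ℕ∞) f) (q v w : ℝ × (Fin 3 → ℝ)) :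
    fderiv ℝ (fun p => fderiv ℝ f p v) q w = fderiv ℝ (fun p => fderiv ℝ f p w) q v := by
  have hd : ContDiff ℝ (⊤:ℕ∞) (fderiv ℝ f) := smooth_fderiv hf
  have h1 : ∀ u : ℝ × (Fin 3 → ℝ), fderiv ℝ (fun p => fderiv ℝ f p u) q
      = (ContinuousLinearMap.apply ℝ ℝ u).comp (fderiv ℝ (fderiv ℝ f) q) := by
    intro u
    exact ((ContinuousLinearMap.apply ℝ ℝ u).hasFDerivAt.comp q
      ((hd.differentiable (by simp) q).hasFDerivAt)).fderiv
  rw [h1 v, h1 w]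
  simp only [ContinuousLinearMap.coe_comp', Function.comp_apply,
    ContinuousLinearMap.apply_apply]
  exact (hf.contDiffAt.isSymmSndFDerivAt (by simp [minSmoothness_of_isRCLikeNormedField]; norm_cast)).eq w v

private lemma dX_dEta_comm {i : Fin 3} (hf : ContDiff ℝ (⊤:ℕ∞) f)
    (q : ℝ × (Fin 3 → ℝ)) : dX i (dEta f) q = dEta (dX i f) q :=
  fderiv_swap hf q ((1:ℝ), (0 : Fin 3 → ℝ)) ((0:ℝ), Pi.single i (1:ℝ))

private lemma dEta_lap (hf : ContDiff ℝ (⊤:ℕ∞) f) (q : ℝ × (Fin 3 → ℝ)) :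
    dEta (lap f) q = ∑ i : Fin 3, dEta (dX i (dX i f)) q := by
  have h : ∀ i : Fin 3, DifferentiableAt ℝ (dX i (dX i f)) q :=
    fun i => ((smooth_dX i (smooth_dX i hf)).differentiable (by simp)) q
  exact fdv_sum h

end Aux

/-- On a spatially flat (`K = 0`) Friedmann background, the background Einstein
equations together with the three first-order Einstein equations for the gauge-invariant
perturbations `Φ`, `φ₁` imply the first-order perturbed Klein–Gordon equation
`∂_η²φ₁ + 2ℋ∂_ηφ₁ − Δφ₁ − 4∂_ηΦ·φ′ + 2a²V′(φ)Φ + a²V″(φ)φ₁ = 0`;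
hence the first-order Klein–Gordon equation is not independent of the background and
first-order Einstein equations. -/
theorem first_order_klein_gordon_from_einstein
    (G : ℝ) (hG : G ≠ 0)
    (a φ : ℝ → ℝ) (ha : ContDiff ℝ (⊤ : ℕ∞) a) (hapos : ∀ η, 0 < a η)
    (hφ : ContDiff ℝ (⊤ : ℕ∞) φ) (hφ' : ∀ η : ℝ, deriv φ η ≠ 0)
    (V : ℝ → ℝ) (hV : ContDiff ℝ (⊤ : ℕ∞) V)
    (Φ φ₁ : ℝ × (Fin 3 → ℝ) → ℝ)
    (hΦ : ContDiff ℝ (⊤ : ℕ∞) Φ) (hφ₁ : ContDiff ℝ (⊤ : ℕ∞) φ₁)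
    (hFriedmann1 : ∀ η : ℝ,
      (deriv a η / a η) ^ 2
        = (8 * Real.pi * G / 3) * ((1 / 2) * (deriv φ η) ^ 2 + (a η) ^ 2 * V (φ η)))
    (hFriedmann2 : ∀ η : ℝ,
      2 * deriv (fun t => deriv a t / a t) η + (deriv a η / a η) ^ 2
        = 8 * Real.pi * G * (-(1 / 2) * (deriv φ η) ^ 2 + (a η) ^ 2 * V (φ η)))
    (hEin1 : ∀ q : ℝ × (Fin 3 → ℝ),
      lap Φ q - 3 * (deriv a q.1 / a q.1) * dEta Φ q
          - (deriv (fun t => deriv a t / a t) q.1 + 2 * (deriv a q.1 / a q.1) ^ 2) * Φ q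
        = 4 * Real.pi * G
            * (dEta φ₁ q * deriv φ q.1 + (a q.1) ^ 2 * deriv V (φ q.1) * φ₁ q))
    (hEin2 : ∀ q : ℝ × (Fin 3 → ℝ),
      dEta Φ q + (deriv a q.1 / a q.1) * Φ q
        = 4 * Real.pi * G * (φ₁ q * deriv φ q.1))
    (hEin3 : ∀ q : ℝ × (Fin 3 → ℝ),
      dEta (dEta Φ) q + 3 * (deriv a q.1 / a q.1) * dEta Φ q
          + (deriv (fun t => deriv a t / a t) q.1 + 2 * (deriv a q.1 / a q.1) ^ 2) * Φ q
        = 4 * Real.pi * G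
            * (dEta φ₁ q * deriv φ q.1 - (a q.1) ^ 2 * deriv V (φ q.1) * φ₁ q)) :
    ∀ q : ℝ × (Fin 3 → ℝ),
      dEta (dEta φ₁) q + 2 * (deriv a q.1 / a q.1) * dEta φ₁ q - lap φ₁ q
        - 4 * dEta Φ q * deriv φ q.1
        + 2 * (a q.1) ^ 2 * deriv V (φ q.1) * Φ q
        + (a q.1) ^ 2 * deriv (deriv V) (φ q.1) * φ₁ q
      = 0 := by
  -- background smoothness
  have hane : ∀ t, a t ≠ 0 := fun t => (hapos t).ne'
  have hda : ContDiff ℝ (⊤:ℕ∞) (deriv a) := (contDiff_infty_iff_deriv.mp ha).2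
  have hH : ContDiff ℝ (⊤:ℕ∞) (fun t => deriv a t / a t) := hda.div ha hane
  have hHd : ContDiff ℝ (⊤:ℕ∞) (deriv (fun t => deriv a t / a t)) :=
    (contDiff_infty_iff_deriv.mp hH).2
  have hdφ : ContDiff ℝ (⊤:ℕ∞) (deriv φ) := (contDiff_infty_iff_deriv.mp hφ).2
  have hddφ : ContDiff ℝ (⊤:ℕ∞) (deriv (deriv φ)) := (contDiff_infty_iff_deriv.mp hdφ).2
  have hdV : ContDiff ℝ (⊤:ℕ∞) (deriv V) := (contDiff_infty_iff_deriv.mp hV).2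
  -- HasDerivAt producers
  have Da : ∀ t, HasDerivAt a (deriv a t) t := fun t => ((ha.differentiable (by simp)) t).hasDerivAt
  have DH : ∀ t, HasDerivAt (fun t => deriv a t / a t)
      (deriv (fun t => deriv a t / a t) t) t := fun t =>
    ((hH.differentiable (by simp)) t).hasDerivAt
  have DHd : ∀ t, HasDerivAt (deriv (fun t => deriv a t / a t))
      (deriv (deriv (fun t => deriv a t / a t)) t) t := fun t =>
    ((hHd.differentiable (by simp)) t).hasDerivAt
  have Dφ : ∀ t, HasDerivAt φ (deriv φ t) t := fun t => ((hφ.differentiable (by simp)) t).hasDerivAt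
  have Ddφ : ∀ t, HasDerivAt (deriv φ) (deriv (deriv φ) t) t := fun t =>
    ((hdφ.differentiable (by simp)) t).hasDerivAt
  have DV : ∀ x, HasDerivAt V (deriv V x) x := fun x => ((hV.differentiable (by simp)) x).hasDerivAt
  have DdV : ∀ x, HasDerivAt (deriv V) (deriv (deriv V) x) x := fun x =>
    ((hdV.differentiable (by simp)) x).hasDerivAt
  -- background pointwise identities
  have hB1 : ∀ t, deriv (fun t => deriv a t / a t) t - (deriv a t / a t)^2
      = -(4*Real.pi*G) * (deriv φ t)^2 := by
    intro t
    linear_combination (hFriedmann2 t)/2 - (3/2) * (hFriedmann1 t)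
  have hda_eq : ∀ t, deriv a t = (deriv a t / a t) * a t := by
    intro t; exact (div_mul_cancel₀ (deriv a t) (hane t)).symm
  -- derivative of Friedmann 1
  have hF1' : ∀ t, 2 * (deriv a t / a t) * deriv (fun t => deriv a t / a t) t
      = (8*Real.pi*G/3) * (deriv φ t * deriv (deriv φ) t
          + ((2 * a t * deriv a t) * V (φ t) + a t^2 * (deriv V (φ t) * deriv φ t))) := by
    intro t
    have hF1fun : (fun t => (deriv a t / a t)^2)
        = (fun t => (8 * Real.pi * G / 3) * ((1 / 2) * (deriv φ t) ^ 2 + (a t) ^ 2 * V (φ t))) :=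
      funext hFriedmann1
    have hL : HasDerivAt (fun t => (deriv a t / a t)^2)
        ((2:ℕ) * (deriv a t / a t)^(2-1) * deriv (fun t => deriv a t / a t) t) t :=
      (DH t).pow 2
    have hVφ : HasDerivAt (fun t => V (φ t)) (deriv V (φ t) * deriv φ t) t :=
      (DV (φ t)).comp t (Dφ t)
    have hR : HasDerivAt
        (fun t => (8 * Real.pi * G / 3) * ((1 / 2) * (deriv φ t) ^ 2 + (a t) ^ 2 * V (φ t)))
        ((8*Real.pi*G/3) * ((1/2) * ((2:ℕ) * (deriv φ t)^(2-1) * deriv (deriv φ) t)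
          + (((2:ℕ) * a t^(2-1) * deriv a t) * V (φ t) + a t^2 * (deriv V (φ t) * deriv φ t)))) t :=
      ((((Ddφ t).pow 2).const_mul (1/2)).add (((Da t).pow 2).mul hVφ)).const_mul (8*Real.pi*G/3)
    have h := (hF1fun ▸ hL).unique hR
    push_cast at h
    linear_combination h
  -- background Klein-Gordon
  have hKG : ∀ t, deriv (deriv φ) t + 2 * (deriv a t / a t) * deriv φ t
      + a t^2 * deriv V (φ t) = 0 := by
    intro t
    have hCne : (8*Real.pi*G/3) * deriv φ t ≠ 0 := by
      apply mul_ne_zero _ (hφ' t)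
      have : Real.pi ≠ 0 := Real.pi_ne_zero
      positivity
    have key : ((8*Real.pi*G/3) * deriv φ t) * (deriv (deriv φ) t
        + 2 * (deriv a t / a t) * deriv φ t + a t^2 * deriv V (φ t)) = 0 := by
      linear_combination (-1) * hF1' t + 2 * (deriv a t / a t) * hB1 t
        + 2 * (deriv a t / a t) * hFriedmann1 t
        - 2 * (8*Real.pi*G/3) * a t * V (φ t) * hda_eq t
    exact (mul_eq_zero.mp key).resolve_left hCne
  -- second derivative of H
  have hB3 : ∀ t, deriv (deriv (fun t => deriv a t / a t)) t
      = -2 * (deriv a t / a t) * deriv (fun t => deriv a t / a t) t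
        + 4 * (deriv a t / a t)^3
        + 2 * (4*Real.pi*G) * a t^2 * deriv V (φ t) * deriv φ t := by
    intro t
    have hB1fun : (fun t => deriv (fun t => deriv a t / a t) t - (deriv a t / a t)^2)
        = (fun t => -(4*Real.pi*G) * (deriv φ t)^2) := funext hB1
    have hL : HasDerivAt (fun t => deriv (fun t => deriv a t / a t) t - (deriv a t / a t)^2)
        (deriv (deriv (fun t => deriv a t / a t)) t
          - (2:ℕ) * (deriv a t / a t)^(2-1) * deriv (fun t => deriv a t / a t) t) t :=
      (DHd t).sub ((DH t).pow 2)
    have hR : HasDerivAt (fun t => -(4*Real.pi*G) * (deriv φ t)^2)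
        (-(4*Real.pi*G) * ((2:ℕ) * (deriv φ t)^(2-1) * deriv (deriv φ) t)) t :=
      ((Ddφ t).pow 2).const_mul (-(4*Real.pi*G))
    have h := (hB1fun ▸ hL).unique hR
    push_cast at h
    linear_combination h - 8*Real.pi*G*(deriv φ t) * hKG t + 4 * (deriv a t / a t) * hB1 t
  -- now the perturbation part
  intro q
  have dd : ∀ {f : ℝ × (Fin 3 → ℝ) → ℝ}, ContDiff ℝ (⊤:ℕ∞) f →
      ∀ p, DifferentiableAt ℝ f p := fun h p => (h.differentiable (by simp)) p
  have ddc : ∀ {c : ℝ → ℝ}, ContDiff ℝ (⊤:ℕ∞) c → ∀ t : ℝ, DifferentiableAt ℝ c t :=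
    fun h t => (h.differentiable (by simp)) t
  have sΦ' := smooth_dEta hΦ
  have sφ₁' := smooth_dEta hφ₁
  have slapΦ := smooth_lap hΦ
  -- smooth coefficient functions
  have hc3H : ContDiff ℝ (⊤:ℕ∞) (fun t => 3 * (deriv a t / a t)) := contDiff_const.mul hH
  have hcHH : ContDiff ℝ (⊤:ℕ∞)
      (fun t => deriv (fun t => deriv a t / a t) t + 2 * (deriv a t / a t)^2) :=
    hHd.add (contDiff_const.mul (hH.pow 2))
  have hcaV : ContDiff ℝ (⊤:ℕ∞) (fun t => a t^2 * deriv V (φ t)) :=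
    (ha.pow 2).mul (hdV.comp hφ)
  -- smooth composite functions on Q
  have sA2 : ContDiff ℝ (⊤:ℕ∞) (fun p : ℝ × (Fin 3 → ℝ) =>
      3 * (deriv a p.1 / a p.1) * dEta Φ p) := (hc3H.comp contDiff_fst).mul sΦ'
  have sA3 : ContDiff ℝ (⊤:ℕ∞) (fun p : ℝ × (Fin 3 → ℝ) =>
      (deriv (fun t => deriv a t / a t) p.1 + 2 * (deriv a p.1 / a p.1)^2) * Φ p) :=
    (hcHH.comp contDiff_fst).mul hΦ
  have sB1 : ContDiff ℝ (⊤:ℕ∞) (fun p : ℝ × (Fin 3 → ℝ) => dEta φ₁ p * deriv φ p.1) :=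
    sφ₁'.mul (hdφ.comp contDiff_fst)
  have sB2 : ContDiff ℝ (⊤:ℕ∞) (fun p : ℝ × (Fin 3 → ℝ) =>
      a p.1^2 * deriv V (φ p.1) * φ₁ p) := ((hcaV.comp contDiff_fst)).mul hφ₁
  ----------------------------------------------------------------
  -- hD1 : dEta of hEin1 at q
  ----------------------------------------------------------------
  have e1 : (fun p : ℝ × (Fin 3 → ℝ) => lap Φ p - 3 * (deriv a p.1 / a p.1) * dEta Φ p
      - (deriv (fun t => deriv a t / a t) p.1 + 2 * (deriv a p.1 / a p.1) ^ 2) * Φ p)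
      = (fun p : ℝ × (Fin 3 → ℝ) => 4 * Real.pi * G
          * (dEta φ₁ p * deriv φ p.1 + (a p.1) ^ 2 * deriv V (φ p.1) * φ₁ p)) :=
    funext hEin1
  have hderiv3H : deriv (fun t => 3 * (deriv a t / a t)) q.1
      = 3 * deriv (fun t => deriv a t / a t) q.1 := by
    rw [deriv_const_mul _ (ddc hH q.1)]
  have hderivHH : deriv
      (fun t => deriv (fun t => deriv a t / a t) t + 2 * (deriv a t / a t)^2) q.1
      = deriv (deriv (fun t => deriv a t / a t)) q.1
        + 4 * (deriv a q.1 / a q.1) * deriv (fun t => deriv a t / a t) q.1 := by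
    have h : HasDerivAt (fun t => deriv (fun t => deriv a t / a t) t + 2 * (deriv a t / a t)^2)
        (deriv (deriv (fun t => deriv a t / a t)) q.1
          + 2 * ((2:ℕ) * (deriv a q.1 / a q.1)^(2-1) * deriv (fun t => deriv a t / a t) q.1)) q.1 :=
      (DHd q.1).add (((DH q.1).pow 2).const_mul 2)
    rw [h.deriv]; push_cast; ring
  have hderivaV : deriv (fun t => a t^2 * deriv V (φ t)) q.1
      = 2 * a q.1 * deriv a q.1 * deriv V (φ q.1)
        + a q.1^2 * (deriv (deriv V) (φ q.1) * deriv φ q.1) := by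
    have h : HasDerivAt (fun t => a t^2 * deriv V (φ t))
        (((2:ℕ) * a q.1^(2-1) * deriv a q.1) * deriv V (φ q.1)
          + a q.1^2 * (deriv (deriv V) (φ q.1) * deriv φ q.1)) q.1 :=
      ((Da q.1).pow 2).mul ((DdV (φ q.1)).comp q.1 (Dφ q.1))
    rw [h.deriv]; push_cast; ring
  have hD1 : dEta (lap Φ) q
      - (3 * deriv (fun t => deriv a t / a t) q.1 * dEta Φ q
          + 3 * (deriv a q.1 / a q.1) * dEta (dEta Φ) q)
      - ((deriv (deriv (fun t => deriv a t / a t)) q.1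
            + 4 * (deriv a q.1 / a q.1) * deriv (fun t => deriv a t / a t) q.1) * Φ q
          + (deriv (fun t => deriv a t / a t) q.1 + 2 * (deriv a q.1 / a q.1)^2) * dEta Φ q)
      = 4 * Real.pi * G * ((dEta (dEta φ₁) q * deriv φ q.1
            + dEta φ₁ q * deriv (deriv φ) q.1)
          + ((2 * a q.1 * deriv a q.1 * deriv V (φ q.1)
                + a q.1^2 * (deriv (deriv V) (φ q.1) * deriv φ q.1)) * φ₁ q
              + a q.1^2 * deriv V (φ q.1) * dEta φ₁ q)) := by
    have eL : dEta (fun p : ℝ × (Fin 3 → ℝ) => lap Φ p - 3 * (deriv a p.1 / a p.1) * dEta Φ p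
        - (deriv (fun t => deriv a t / a t) p.1 + 2 * (deriv a p.1 / a p.1) ^ 2) * Φ p) q
        = dEta (lap Φ) q
          - (3 * deriv (fun t => deriv a t / a t) q.1 * dEta Φ q
              + 3 * (deriv a q.1 / a q.1) * dEta (dEta Φ) q)
          - ((deriv (deriv (fun t => deriv a t / a t)) q.1
                + 4 * (deriv a q.1 / a q.1) * deriv (fun t => deriv a t / a t) q.1) * Φ q
              + (deriv (fun t => deriv a t / a t) q.1
                  + 2 * (deriv a q.1 / a q.1)^2) * dEta Φ q) := by
      rw [dEta_sub ((dd slapΦ q).fun_sub (dd sA2 q)) (dd sA3 q),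
        dEta_sub (dd slapΦ q) (dd sA2 q),
        dEta_cmul (c := fun t => 3 * (deriv a t / a t)) (ddc hc3H q.1) (dd sΦ' q),
        dEta_cmul (c := fun t => deriv (fun t => deriv a t / a t) t + 2 * (deriv a t / a t)^2)
          (ddc hcHH q.1) (dd hΦ q),
        hderiv3H, hderivHH]
    have eR : dEta (fun p : ℝ × (Fin 3 → ℝ) => 4 * Real.pi * G
        * (dEta φ₁ p * deriv φ p.1 + (a p.1) ^ 2 * deriv V (φ p.1) * φ₁ p)) q
        = 4 * Real.pi * G * ((dEta (dEta φ₁) q * deriv φ q.1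
              + dEta φ₁ q * deriv (deriv φ) q.1)
            + ((2 * a q.1 * deriv a q.1 * deriv V (φ q.1)
                  + a q.1^2 * (deriv (deriv V) (φ q.1) * deriv φ q.1)) * φ₁ q
                + a q.1^2 * deriv V (φ q.1) * dEta φ₁ q)) := by
      rw [dEta_const_mul ((dd sB1 q).fun_add (dd sB2 q)) (4 * Real.pi * G),
        dEta_add (dd sB1 q) (dd sB2 q),
        dEta_mulc (c := deriv φ) (ddc hdφ q.1) (dd sφ₁' q),
        dEta_cmul (c := fun t => a t^2 * deriv V (φ t)) (ddc hcaV q.1) (dd hφ₁ q),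
        hderivaV]
    calc dEta (lap Φ) q
          - (3 * deriv (fun t => deriv a t / a t) q.1 * dEta Φ q
              + 3 * (deriv a q.1 / a q.1) * dEta (dEta Φ) q)
          - ((deriv (deriv (fun t => deriv a t / a t)) q.1
                + 4 * (deriv a q.1 / a q.1) * deriv (fun t => deriv a t / a t) q.1) * Φ q
              + (deriv (fun t => deriv a t / a t) q.1
                  + 2 * (deriv a q.1 / a q.1)^2) * dEta Φ q)
        = dEta (fun p : ℝ × (Fin 3 → ℝ) => lap Φ p - 3 * (deriv a p.1 / a p.1) * dEta Φ p
            - (deriv (fun t => deriv a t / a t) p.1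
                + 2 * (deriv a p.1 / a p.1) ^ 2) * Φ p) q := eL.symm
      _ = dEta (fun p : ℝ × (Fin 3 → ℝ) => 4 * Real.pi * G
            * (dEta φ₁ p * deriv φ p.1 + (a p.1) ^ 2 * deriv V (φ p.1) * φ₁ p)) q := by rw [e1]
      _ = _ := eR
  ----------------------------------------------------------------
  -- hL2 : lap of hEin2 at q
  ----------------------------------------------------------------
  have e2 : (fun p : ℝ × (Fin 3 → ℝ) => dEta Φ p + (deriv a p.1 / a p.1) * Φ p)
      = (fun p : ℝ × (Fin 3 → ℝ) => 4 * Real.pi * G * (φ₁ p * deriv φ p.1)) :=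
    funext hEin2
  have sHΦ : ContDiff ℝ (⊤:ℕ∞) (fun p : ℝ × (Fin 3 → ℝ) => (deriv a p.1 / a p.1) * Φ p) :=
    (hH.comp contDiff_fst).mul hΦ
  have sφdφ : ContDiff ℝ (⊤:ℕ∞) (fun p : ℝ × (Fin 3 → ℝ) => φ₁ p * deriv φ p.1) :=
    hφ₁.mul (hdφ.comp contDiff_fst)
  have hXL : ∀ i : Fin 3,
      dX i (fun p : ℝ × (Fin 3 → ℝ) => dEta Φ p + (deriv a p.1 / a p.1) * Φ p)
      = (fun p => dEta (dX i Φ) p + (deriv a p.1 / a p.1) * dX i Φ p) := by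
    intro i; funext p
    rw [show dX i (fun p : ℝ × (Fin 3 → ℝ) => dEta Φ p + (deriv a p.1 / a p.1) * Φ p) p
        = dX i (dEta Φ) p + (deriv a p.1 / a p.1) * dX i Φ p from
      by rw [dX_add (dd sΦ' p) (dd sHΦ p), dX_cmul (c := fun t => deriv a t / a t)
          (ddc hH p.1) (dd hΦ p)]]
    rw [dX_dEta_comm hΦ]
  have hXR : ∀ i : Fin 3,
      dX i (fun p : ℝ × (Fin 3 → ℝ) => 4 * Real.pi * G * (φ₁ p * deriv φ p.1))
      = (fun p => 4 * Real.pi * G * (dX i φ₁ p * deriv φ p.1)) := by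
    intro i; funext p
    rw [dX_const_mul (dd sφdφ p) (4 * Real.pi * G),
      dX_mulc (c := deriv φ) (ddc hdφ p.1) (dd hφ₁ p)]
  have sXΦ : ∀ i : Fin 3, ContDiff ℝ (⊤:ℕ∞) (dX i Φ) := fun i => smooth_dX i hΦ
  have sXφ₁ : ∀ i : Fin 3, ContDiff ℝ (⊤:ℕ∞) (dX i φ₁) := fun i => smooth_dX i hφ₁
  have sEXΦ : ∀ i : Fin 3, ContDiff ℝ (⊤:ℕ∞) (dEta (dX i Φ)) :=
    fun i => smooth_dEta (sXΦ i)
  have sHXΦ : ∀ i : Fin 3, ContDiff ℝ (⊤:ℕ∞)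
      (fun p : ℝ × (Fin 3 → ℝ) => (deriv a p.1 / a p.1) * dX i Φ p) :=
    fun i => (hH.comp contDiff_fst).mul (sXΦ i)
  have sXφdφ : ∀ i : Fin 3, ContDiff ℝ (⊤:ℕ∞)
      (fun p : ℝ × (Fin 3 → ℝ) => dX i φ₁ p * deriv φ p.1) :=
    fun i => (sXφ₁ i).mul (hdφ.comp contDiff_fst)
  have hL2 : dEta (lap Φ) q + (deriv a q.1 / a q.1) * lap Φ q
      = 4 * Real.pi * G * (lap φ₁ q * deriv φ q.1) := by
    have hLlap : lap (fun p : ℝ × (Fin 3 → ℝ) => dEta Φ p + (deriv a p.1 / a p.1) * Φ p) q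
        = dEta (lap Φ) q + (deriv a q.1 / a q.1) * lap Φ q := by
      have hterm : ∀ i : Fin 3,
          dX i (dX i (fun p : ℝ × (Fin 3 → ℝ) => dEta Φ p + (deriv a p.1 / a p.1) * Φ p)) q
          = dEta (dX i (dX i Φ)) q + (deriv a q.1 / a q.1) * dX i (dX i Φ) q := by
        intro i
        rw [hXL i]
        rw [dX_add (dd (sEXΦ i) q) (dd (sHXΦ i) q),
          dX_cmul (c := fun t => deriv a t / a t) (ddc hH q.1) (dd (sXΦ i) q),
          dX_dEta_comm (sXΦ i)]
      show (∑ i : Fin 3, dX i (dX i (fun p : ℝ × (Fin 3 → ℝ) =>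
          dEta Φ p + (deriv a p.1 / a p.1) * Φ p)) q) = _
      rw [Finset.sum_congr rfl (fun i _ => hterm i), Finset.sum_add_distrib,
        ← Finset.mul_sum, ← dEta_lap hΦ q]
      rfl
    have hRlap : lap (fun p : ℝ × (Fin 3 → ℝ) => 4 * Real.pi * G * (φ₁ p * deriv φ p.1)) q
        = 4 * Real.pi * G * (lap φ₁ q * deriv φ q.1) := by
      have hterm : ∀ i : Fin 3,
          dX i (dX i (fun p : ℝ × (Fin 3 → ℝ) => 4 * Real.pi * G * (φ₁ p * deriv φ p.1))) q
          = 4 * Real.pi * G * (dX i (dX i φ₁) q * deriv φ q.1) := by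
        intro i
        rw [hXR i]
        rw [dX_const_mul (dd (sXφdφ i) q) (4 * Real.pi * G),
          dX_mulc (c := deriv φ) (ddc hdφ q.1) (dd (sXφ₁ i) q)]
      show (∑ i : Fin 3, dX i (dX i (fun p : ℝ × (Fin 3 → ℝ) =>
          4 * Real.pi * G * (φ₁ p * deriv φ p.1))) q) = _
      rw [Finset.sum_congr rfl (fun i _ => hterm i)]
      rw [← Finset.mul_sum, ← Finset.sum_mul]
      rfl
    rw [← hLlap, ← hRlap, e2]
  ----------------------------------------------------------------
  -- final algebra
  ----------------------------------------------------------------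
  have hE1q := hEin1 q
  have hE3q := hEin3 q
  have hB1q := hB1 q.1
  have hKGq := hKG q.1
  have hB3q := hB3 q.1
  have hdaq := hda_eq q.1
  have hPne : (4 * Real.pi * G) * deriv φ q.1 ≠ 0 := by
    apply mul_ne_zero _ (hφ' q.1)
    have hpi : Real.pi ≠ 0 := Real.pi_ne_zero
    positivity
  have key : ((4 * Real.pi * G) * deriv φ q.1) *
      (dEta (dEta φ₁) q + 2 * (deriv a q.1 / a q.1) * dEta φ₁ q - lap φ₁ q
        - 4 * dEta Φ q * deriv φ q.1
        + 2 * (a q.1) ^ 2 * deriv V (φ q.1) * Φ q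
        + (a q.1) ^ 2 * deriv (deriv V) (φ q.1) * φ₁ q) = 0 := by
    linear_combination (-1) * hD1 + hL2 - (deriv a q.1 / a q.1) * hE1q
      - 3 * (deriv a q.1 / a q.1) * hE3q - 4 * (dEta Φ q) * hB1q
      - (4 * Real.pi * G) * (dEta φ₁ q) * hKGq - (Φ q) * hB3q
      - 2 * (4 * Real.pi * G) * (deriv V (φ q.1)) * (φ₁ q) * (a q.1) * hdaq
  exact (mul_eq_zero.mp key).resolve_left hPne
end
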